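/- arXiv:2003.07084 — 6 statements merged into one kernel-verified Lean document; each statement's English description precedes it below -/
import Mathlib

section
/- Let d ≥ 2, p ∈ (1,∞), and r > 0. Then for every index i ≠ 1, (1/2)·⨍_{∂B_r} |y₁|^p dσ(y) = ((p−1)/2)·⨍_{∂B_r} |y₁|^{p-2} y_i² dσ(y), where ⨍ denotes the average over the sphere ∂B_r ⊂ ℝ^d of radius r centered at the origin. -/
open Real MeasureTheory Metric intervalIntegral Filter Set

namespace Stmt5

noncomputable def gf (p c : ℝ) : ℝ := |c| ^ (p - 2) * c

lemma gf_zero (p : ℝ) : gf p 0 = 0 := by simp [gf]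

lemma abs_gf {p : ℝ} (hp : 1 < p) (c : ℝ) : |gf p c| = |c| ^ (p - 1) := by
  rcases eq_or_ne c 0 with rfl | hc
  · rw [gf_zero, abs_zero]; exact (Real.zero_rpow (by linarith)).symm
  · have h0 : (0:ℝ) < |c| := abs_pos.2 hc
    rw [gf, abs_mul, abs_of_nonneg (Real.rpow_nonneg (abs_nonneg c) _),
      show p - 1 = (p-2) + 1 by ring, Real.rpow_add_one h0.ne']

lemma continuous_gf {p : ℝ} (hp : 1 < p) : Continuous (gf p) := by
  rw [continuous_iff_continuousAt]
  intro c
  rcases eq_or_ne c 0 with rfl | hc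
  · have h1 : Filter.Tendsto (gf p) (nhds 0) (nhds 0) := by
      apply squeeze_zero_norm (fun x => (abs_gf hp x).le)
      have h2 : ContinuousAt (fun x : ℝ => |x| ^ (p-1)) 0 :=
        (Real.continuousAt_rpow_const _ _ (Or.inr (by linarith))).comp
          continuous_abs.continuousAt
      simpa [Real.zero_rpow (show p - 1 ≠ 0 by linarith)] using h2.tendsto
    simpa [ContinuousAt, gf_zero] using h1
  · exact (((Real.continuousAt_rpow_const _ _ (Or.inl (abs_ne_zero.2 hc))).comp
      continuous_abs.continuousAt).mul continuousAt_id)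

lemma hasDerivAt_gf {p : ℝ} (hp : 1 < p) {c : ℝ} (hc : c ≠ 0) :
    HasDerivAt (gf p) ((p - 1) * |c| ^ (p - 2)) c := by
  rcases hc.lt_or_gt with h | h
  · have h2 : HasDerivAt (fun x : ℝ => (-x) ^ (p - 1))
        (((p-1) * (-c) ^ (p - 1 - 1)) * (-1)) c :=
      (Real.hasDerivAt_rpow_const (p := p - 1) (Or.inl (neg_ne_zero.2 hc))).comp c
        (hasDerivAt_neg c)
    have h1 : HasDerivAt (fun x : ℝ => -((-x) ^ (p - 1))) ((p-1) * |c| ^ (p-2)) c := by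
      refine h2.neg.congr_deriv ?_
      rw [abs_of_neg h, show p - 1 - 1 = p - 2 by ring]
      ring
    apply h1.congr_of_eventuallyEq
    filter_upwards [Iio_mem_nhds h] with x hx
    have hx0 : (0:ℝ) < -x := by simpa using hx
    rw [gf, abs_of_neg hx, show p - 1 = (p - 2) + 1 by ring, Real.rpow_add_one hx0.ne']
    ring
  · have h1 : HasDerivAt (fun x : ℝ => x ^ (p - 1)) ((p-1) * |c| ^ (p-2)) c := by
      have h2 := Real.hasDerivAt_rpow_const (x := c) (p := p - 1) (Or.inl hc)
      convert h2 using 2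
      rw [abs_of_pos h]; ring
    apply h1.congr_of_eventuallyEq
    filter_upwards [Ioi_mem_nhds h] with x hx
    have hx0 : (0:ℝ) < x := hx
    rw [gf, abs_of_pos hx0, show p - 1 = (p - 2) + 1 by ring, Real.rpow_add_one hx0.ne']

lemma hsq {p : ℝ} (hp : 1 < p) (c : ℝ) : |c| ^ (p - 2) * c ^ 2 = |c| ^ p := by
  rcases eq_or_ne c 0 with rfl | hc
  · simp [Real.zero_rpow (show p ≠ 0 by linarith)]
  · have h0 : (0:ℝ) < |c| := abs_pos.2 hc
    calc |c| ^ (p-2) * c ^ 2 = |c| ^ (p-2) * |c| * |c| := by rw [← sq_abs c]; ring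
      _ = |c| ^ (p - 2 + 1 + 1) := by
          rw [Real.rpow_add_one h0.ne', Real.rpow_add_one h0.ne']
      _ = |c| ^ p := by congr 1; ring

noncomputable def df (p θ : ℝ) : ℝ :=
  |Real.cos θ| ^ p - (p - 1) * (|Real.cos θ| ^ (p - 2) * Real.sin θ ^ 2)

lemma hasDerivAt_F {p : ℝ} (hp : 1 < p) {θ : ℝ} (hc : Real.cos θ ≠ 0) :
    HasDerivAt (fun t => gf p (Real.cos t) * Real.sin t) (df p θ) θ := by
  have h1 : HasDerivAt (fun t => gf p (Real.cos t))
      ((p - 1) * |Real.cos θ| ^ (p - 2) * (-Real.sin θ)) θ :=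
    (hasDerivAt_gf hp hc).comp θ (Real.hasDerivAt_cos θ)
  have h2 := h1.mul (Real.hasDerivAt_sin θ)
  refine h2.congr_deriv ?_
  rw [df, gf]
  linear_combination hsq hp (Real.cos θ)

lemma measurable_abs_cos_rpow (p : ℝ) : Measurable fun θ : ℝ => |Real.cos θ| ^ (p - 2) :=
  (Real.continuous_cos.abs.measurable).pow_const _

-- Jordan bound: on [0, π], |cos θ| ≥ (2/π) |θ - π/2|
lemma jordan_cos {θ : ℝ} (h0 : 0 ≤ θ) (h1 : θ ≤ π) :
    2 / π * |θ - π / 2| ≤ |Real.cos θ| := by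
  have hx : |θ - π / 2| ≤ π / 2 := by
    rw [abs_le]; constructor <;> linarith
  have h2 := Real.mul_le_sin (abs_nonneg (θ - π / 2)) hx
  have h3 : Real.sin |θ - π / 2| ≤ |Real.cos θ| := by
    rcases le_total θ (π / 2) with h | h
    · rw [abs_of_nonpos (by linarith), ← Real.sin_pi_div_two_sub]
      have : π / 2 - θ = -(θ - π/2) := by ring
      rw [← this]
      exact le_abs_self _
    · rw [abs_of_nonneg (by linarith)]
      have : Real.sin (θ - π / 2) = -Real.cos θ := by
        rw [Real.sin_sub, Real.sin_pi_div_two, Real.cos_pi_div_two]; ring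
      rw [this]
      exact neg_le_abs _
  exact h2.trans h3

lemma II_abs_rpow {p c : ℝ} (hp : 1 < p) (a b : ℝ) :
    IntervalIntegrable (fun θ : ℝ => |θ - c| ^ (p - 2)) MeasureTheory.volume a b := by
  have key : ∀ u v : ℝ, c ≤ u → IntervalIntegrable
      (fun θ : ℝ => |θ - c| ^ (p - 2)) MeasureTheory.volume u v → True := fun _ _ _ _ => trivial
  -- prove for any interval by splitting at c
  have hR : ∀ v : ℝ, IntervalIntegrable (fun θ : ℝ => |θ - c| ^ (p - 2))
      MeasureTheory.volume c v := by
    intro v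
    rcases le_total c v with h | h
    · have h1 : IntervalIntegrable (fun x : ℝ => (x - c) ^ (p - 2)) MeasureTheory.volume c v := by
        have := (intervalIntegrable_rpow' (show (-1:ℝ) < p - 2 by linarith)
          (a := 0) (b := v - c)).comp_sub_right c
        simpa using this
      rw [intervalIntegrable_iff] at h1 ⊢
      apply h1.congr_fun ?_ measurableSet_uIoc
      intro x hx
      rw [Set.uIoc_of_le h] at hx
      simp only
      rw [abs_of_nonneg (by linarith [hx.1] : (0:ℝ) ≤ x - c)]
    · have h1 : IntervalIntegrable (fun x : ℝ => (c - x) ^ (p - 2)) MeasureTheory.volume v c := by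
        have := (intervalIntegrable_rpow' (show (-1:ℝ) < p - 2 by linarith)
          (a := c - v) (b := 0)).comp_sub_left c
        simpa using this
      rw [intervalIntegrable_iff] at h1 ⊢
      rw [Set.uIoc_comm]
      apply h1.congr_fun ?_ measurableSet_uIoc
      intro x hx
      rw [Set.uIoc_of_le h] at hx
      simp only
      rw [abs_of_nonpos (by linarith [hx.2] : x - c ≤ (0:ℝ)), neg_sub]
  exact ((hR a).symm.trans (hR b))

lemma II_abs_cos_pi {p : ℝ} (hp : 1 < p) :
    IntervalIntegrable (fun θ : ℝ => |Real.cos θ| ^ (p - 2)) MeasureTheory.volume 0 π := by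
  rcases le_or_gt 2 p with h2 | h2
  · apply (_root_.intervalIntegrable_const (c := (1:ℝ))).mono_fun
      (measurable_abs_cos_rpow p).aestronglyMeasurable
    filter_upwards with θ
    rw [Real.norm_eq_abs, Real.norm_eq_abs,
      abs_of_nonneg (Real.rpow_nonneg (abs_nonneg _) _), abs_one]
    exact Real.rpow_le_one (abs_nonneg _) (Real.abs_cos_le_one θ) (by linarith)

  · apply ((II_abs_rpow hp (c := π/2) 0 π).const_mul ((2/π) ^ (p-2))).mono_fun
      (measurable_abs_cos_rpow p).aestronglyMeasurable
    filter_upwards [MeasureTheory.ae_restrict_mem measurableSet_uIoc] with θ hθ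
    rw [Set.uIoc_of_le Real.pi_nonneg] at hθ
    rw [Real.norm_eq_abs, Real.norm_eq_abs,
      abs_of_nonneg (Real.rpow_nonneg (abs_nonneg _) _),
      abs_of_nonneg (by positivity : (0:ℝ) ≤ (2/π) ^ (p-2) * |θ - π/2| ^ (p-2))]
    rcases eq_or_ne θ (π/2) with rfl | hne
    · simp [Real.zero_rpow (show p - 2 ≠ 0 by linarith)]
    · have hpos : 0 < 2 / π * |θ - π/2| := by
        have : 0 < |θ - π/2| := abs_pos.2 (sub_ne_zero.2 hne)
        positivity
      have hb := jordan_cos hθ.1.le hθ.2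
      have := Real.rpow_le_rpow_of_nonpos hpos hb (by linarith : p - 2 ≤ 0)
      rwa [Real.mul_rpow (by positivity) (abs_nonneg _)] at this

lemma II_abs_cos {p : ℝ} (hp : 1 < p) :
    IntervalIntegrable (fun θ : ℝ => |Real.cos θ| ^ (p - 2)) MeasureTheory.volume 0 (2*π) := by
  have h2 := (II_abs_cos_pi hp).comp_sub_right π
  have heq : (fun θ : ℝ => |Real.cos (θ - π)| ^ (p - 2))
      = fun θ : ℝ => |Real.cos θ| ^ (p - 2) := by
    funext θ
    rw [show θ - π = -(π - θ) by ring, Real.cos_neg, Real.cos_pi_sub, abs_neg]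
  rw [heq] at h2
  have h3 : IntervalIntegrable (fun θ : ℝ => |Real.cos θ| ^ (p - 2))
      MeasureTheory.volume π (2*π) := by
    rwa [zero_add, ← two_mul] at h2
  exact (II_abs_cos_pi hp).trans h3

lemma II_abs_cos' {p : ℝ} (hp : 1 < p) {a b : ℝ} (h : Set.uIcc a b ⊆ Set.uIcc 0 (2*π)) :
    IntervalIntegrable (fun θ : ℝ => |Real.cos θ| ^ (p - 2)) MeasureTheory.volume a b :=
  (II_abs_cos hp).mono_set h

lemma II_sin_sq {p : ℝ} (hp : 1 < p) {a b : ℝ} (h : Set.uIcc a b ⊆ Set.uIcc 0 (2*π)) :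
    IntervalIntegrable (fun θ : ℝ => |Real.cos θ| ^ (p - 2) * Real.sin θ ^ 2)
      MeasureTheory.volume a b := by
  apply (II_abs_cos' hp h).mono_fun
    (((measurable_abs_cos_rpow p).mul
      ((Real.continuous_sin.measurable).pow_const 2)).aestronglyMeasurable)
  filter_upwards with θ
  simp only [Pi.mul_apply]
  rw [Real.norm_eq_abs, Real.norm_eq_abs, abs_of_nonneg (Real.rpow_nonneg (abs_nonneg _) _),
    abs_of_nonneg (by positivity : (0:ℝ) ≤ |Real.cos θ| ^ (p-2) * Real.sin θ ^ 2)]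
  have h1 : Real.sin θ ^ 2 ≤ 1 := Real.sin_sq_le_one θ
  have h2 : (0:ℝ) ≤ |Real.cos θ| ^ (p-2) := Real.rpow_nonneg (abs_nonneg _) _
  nlinarith

lemma continuous_abs_cos_rpow {p : ℝ} (hp : 1 < p) :
    Continuous fun θ : ℝ => |Real.cos θ| ^ p := by
  rw [continuous_iff_continuousAt]
  intro x
  exact (Real.continuousAt_rpow_const _ _ (Or.inr (by linarith))).comp
    (Real.continuous_cos.abs.continuousAt)

lemma II_df {p : ℝ} (hp : 1 < p) {a b : ℝ} (h : Set.uIcc a b ⊆ Set.uIcc 0 (2*π)) :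
    IntervalIntegrable (df p) MeasureTheory.volume a b :=
  ((continuous_abs_cos_rpow hp).intervalIntegrable a b).sub ((II_sin_sq hp h).const_mul (p-1))

lemma piece {p : ℝ} (hp : 1 < p) {a b : ℝ} (hab : a ≤ b)
    (hsub : Set.uIcc a b ⊆ Set.uIcc 0 (2*π))
    (hcos : ∀ x ∈ Set.Ioo a b, Real.cos x ≠ 0) :
    ∫ θ in a..b, df p θ
      = gf p (Real.cos b) * Real.sin b - gf p (Real.cos a) * Real.sin a :=
  integral_eq_sub_of_hasDerivAt_of_le hab
    ((((continuous_gf hp).comp Real.continuous_cos).mul Real.continuous_sin).continuousOn)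
    (fun x hx => hasDerivAt_F hp (hcos x hx)) (II_df hp hsub)

lemma key1d {p : ℝ} (hp : 1 < p) :
    ∫ θ in (0:ℝ)..(2*π), |Real.cos θ| ^ p
      = (p-1) * ∫ θ in (0:ℝ)..(2*π), |Real.cos θ| ^ (p-2) * Real.sin θ ^ 2 := by
  have hπ := Real.pi_pos
  have hsub1 : Set.uIcc (0:ℝ) (π/2) ⊆ Set.uIcc 0 (2*π) := by
    rw [Set.uIcc_of_le (by linarith), Set.uIcc_of_le (by linarith)]
    apply Set.Icc_subset_Icc <;> linarith
  have hsub2 : Set.uIcc (π/2) (π + π/2) ⊆ Set.uIcc 0 (2*π) := by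
    rw [Set.uIcc_of_le (by linarith), Set.uIcc_of_le (by linarith)]
    apply Set.Icc_subset_Icc <;> linarith
  have hsub3 : Set.uIcc (π + π/2) (2*π) ⊆ Set.uIcc 0 (2*π) := by
    rw [Set.uIcc_of_le (by linarith), Set.uIcc_of_le (by linarith)]
    apply Set.Icc_subset_Icc <;> linarith
  have e1 := piece hp (a := 0) (b := π/2) (by linarith) hsub1
    (fun x hx => (Real.cos_pos_of_mem_Ioo ⟨by linarith [hx.1], hx.2⟩).ne')
  have e2 := piece hp (a := π/2) (b := π + π/2) (by linarith) hsub2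
    (fun x hx => (Real.cos_neg_of_pi_div_two_lt_of_lt hx.1 hx.2).ne)
  have e3 : ∫ θ in (π + π/2)..(2*π), df p θ
      = gf p (Real.cos (2*π)) * Real.sin (2*π)
        - gf p (Real.cos (π + π/2)) * Real.sin (π + π/2) := by
    apply piece hp (by linarith) hsub3
    intro x hx
    have h4 : Real.cos (x - 2*π) > 0 :=
      Real.cos_pos_of_mem_Ioo ⟨by linarith [hx.1], by linarith [hx.2]⟩
    rw [Real.cos_sub_two_pi] at h4
    exact h4.ne'
  have v0 : gf p (Real.cos 0) * Real.sin 0 = 0 := by simp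
  have v1 : gf p (Real.cos (π/2)) * Real.sin (π/2) = 0 := by
    simp [Real.cos_pi_div_two, gf_zero]
  have v2 : gf p (Real.cos (π + π/2)) * Real.sin (π + π/2) = 0 := by
    simp [Real.cos_add, gf_zero]
  have v3 : gf p (Real.cos (2*π)) * Real.sin (2*π) = 0 := by simp [Real.sin_two_pi]
  have i1 := II_df hp hsub1
  have i2 := II_df hp hsub2
  have i3 := II_df hp hsub3
  have total : ∫ θ in (0:ℝ)..(2*π), df p θ = 0 := by
    rw [← intervalIntegral.integral_add_adjacent_intervals i1 (i2.trans i3),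
      ← intervalIntegral.integral_add_adjacent_intervals i2 i3,
      e1, e2, e3, v0, v1, v2, v3]
    ring
  have hI1 : IntervalIntegrable (fun θ : ℝ => |Real.cos θ| ^ p) MeasureTheory.volume 0 (2*π) :=
    (continuous_abs_cos_rpow hp).intervalIntegrable 0 (2*π)
  have hI2 := II_sin_sq hp (subset_refl (Set.uIcc 0 (2*π)))
  have hsubst := intervalIntegral.integral_sub hI1 (hI2.const_mul (p-1))
  have total2 : ∫ θ in (0:ℝ)..(2*π),
      (|Real.cos θ| ^ p - (p-1) * (|Real.cos θ| ^ (p-2) * Real.sin θ ^ 2)) = 0 := by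
    simpa [df] using total
  rw [hsubst, intervalIntegral.integral_const_mul] at total2
  linarith

lemma periodic_A (p : ℝ) : Function.Periodic (fun θ : ℝ => |Real.cos θ| ^ p) (2*π) :=
  fun x => by simp [Real.cos_add_two_pi]

lemma periodic_B (p : ℝ) :
    Function.Periodic (fun θ : ℝ => |Real.cos θ| ^ (p-2) * Real.sin θ ^ 2) (2*π) :=
  fun x => by simp [Real.cos_add_two_pi, Real.sin_add_two_pi]

lemma shift_eq {f : ℝ → ℝ} (hf : Function.Periodic f (2*π)) (φ : ℝ) :
    ∫ θ in (0:ℝ)..(2*π), f (θ + φ) = ∫ θ in (0:ℝ)..(2*π), f θ := by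
  rw [intervalIntegral.integral_comp_add_right]
  have h1 := hf.intervalIntegral_add_eq φ 0
  simpa [add_comm] using h1

lemma pointA {p : ℝ} (hp : 1 < p) {ρ : ℝ} (hρ : 0 ≤ ρ) (c : ℝ) :
    |ρ * c| ^ p = ρ ^ p * |c| ^ p := by
  rw [abs_mul, Real.mul_rpow (abs_nonneg _) (abs_nonneg _), abs_of_nonneg hρ]

lemma pointB {p : ℝ} (hp : 1 < p) {ρ : ℝ} (hρ : 0 ≤ ρ) (c s : ℝ) :
    |ρ * c| ^ (p - 2) * (ρ * s) ^ 2 = ρ ^ p * (|c| ^ (p - 2) * s ^ 2) := by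
  have h2 := hsq hp ρ
  rw [abs_of_nonneg hρ] at h2
  rw [abs_mul, Real.mul_rpow (abs_nonneg _) (abs_nonneg _), abs_of_nonneg hρ, mul_pow]
  linear_combination (|c| ^ (p-2) * s ^ 2) * h2

lemma shiftA {p : ℝ} (hp : 1 < p) {ρ : ℝ} (hρ : 0 ≤ ρ) (φ : ℝ) :
    ∫ θ in (0:ℝ)..(2*π), |ρ * Real.cos (θ + φ)| ^ p
      = ρ ^ p * ∫ θ in (0:ℝ)..(2*π), |Real.cos θ| ^ p := by
  simp_rw [pointA hp hρ]
  rw [intervalIntegral.integral_const_mul]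
  congr 1
  exact shift_eq (periodic_A p) φ

lemma shiftB {p : ℝ} (hp : 1 < p) {ρ : ℝ} (hρ : 0 ≤ ρ) (φ : ℝ) :
    ∫ θ in (0:ℝ)..(2*π), |ρ * Real.cos (θ + φ)| ^ (p - 2) * (ρ * Real.sin (θ + φ)) ^ 2
      = ρ ^ p * ∫ θ in (0:ℝ)..(2*π), |Real.cos θ| ^ (p - 2) * Real.sin θ ^ 2 := by
  simp_rw [pointB hp hρ]
  rw [intervalIntegral.integral_const_mul]
  congr 1
  exact shift_eq (periodic_B p) φ

lemma polar (a b : ℝ) : ∃ φ : ℝ,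
    a = Real.sqrt (a^2 + b^2) * Real.cos φ ∧ b = Real.sqrt (a^2 + b^2) * Real.sin φ := by
  have habs : ‖Complex.mk a b‖ = Real.sqrt (a^2 + b^2) := by
    rw [Complex.norm_def, Complex.normSq_mk]
    ring_nf
  refine ⟨Complex.arg (Complex.mk a b), ?_, ?_⟩
  · have := Complex.norm_mul_cos_arg (Complex.mk a b)
    rw [habs] at this
    exact this.symm
  · have := Complex.norm_mul_sin_arg (Complex.mk a b)
    rw [habs] at this
    exact this.symm

section Rot
variable {n : ℕ}

noncomputable def rotMap (z i : Fin n) (θ : ℝ) (y : EuclideanSpace ℝ (Fin n)) :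
    EuclideanSpace ℝ (Fin n) :=
  WithLp.toLp 2 fun j => if j = z then Real.cos θ * y z - Real.sin θ * y i
    else if j = i then Real.sin θ * y z + Real.cos θ * y i else y j

lemma rotMap_apply_z {z i : Fin n} (hzi : i ≠ z) (θ : ℝ) (y : EuclideanSpace ℝ (Fin n)) :
    rotMap z i θ y z = Real.cos θ * y z - Real.sin θ * y i := by
  simp [rotMap]

lemma rotMap_apply_i {z i : Fin n} (hzi : i ≠ z) (θ : ℝ) (y : EuclideanSpace ℝ (Fin n)) :
    rotMap z i θ y i = Real.sin θ * y z + Real.cos θ * y i := by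
  simp [rotMap, hzi]

lemma rotMap_apply_other {z i : Fin n} {j : Fin n} (hjz : j ≠ z) (hji : j ≠ i) (θ : ℝ)
    (y : EuclideanSpace ℝ (Fin n)) : rotMap z i θ y j = y j := by
  simp [rotMap, hjz, hji]

lemma rotMap_inv {z i : Fin n} (hzi : i ≠ z) (θ : ℝ) (y : EuclideanSpace ℝ (Fin n)) :
    rotMap z i (-θ) (rotMap z i θ y) = y := by
  ext j
  by_cases hjz : j = z
  · subst hjz
    rw [rotMap_apply_z hzi, rotMap_apply_z hzi, rotMap_apply_i hzi,
      Real.cos_neg, Real.sin_neg]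
    have h5 := Real.sin_sq_add_cos_sq θ
    linear_combination (y j) * h5
  · by_cases hji : j = i
    · subst hji
      rw [rotMap_apply_i hzi, rotMap_apply_z hzi, rotMap_apply_i hzi,
        Real.cos_neg, Real.sin_neg]
      have h5 := Real.sin_sq_add_cos_sq θ
      linear_combination (y j) * h5
    · rw [rotMap_apply_other hjz hji, rotMap_apply_other hjz hji]

lemma rotMap_sum_sq {z i : Fin n} (hzi : i ≠ z) (θ : ℝ) (y : EuclideanSpace ℝ (Fin n)) :
    ∑ j, (rotMap z i θ y j) ^ 2 = ∑ j, (y j) ^ 2 := by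
  classical
  have hz : z ∈ Finset.univ.erase i := Finset.mem_erase.2 ⟨fun h => hzi h.symm, Finset.mem_univ z⟩
  have hi : i ∈ (Finset.univ : Finset (Fin n)) := Finset.mem_univ i
  have expand : ∀ g : Fin n → ℝ,
      ∑ j, g j = g i + (g z + ∑ j ∈ (Finset.univ.erase i).erase z, g j) := by
    intro g
    rw [Finset.add_sum_erase _ g hz, Finset.add_sum_erase _ g hi]
  rw [expand, expand (fun j => (y j)^2)]
  have hrest : ∑ j ∈ (Finset.univ.erase i).erase z, (rotMap z i θ y j) ^ 2
      = ∑ j ∈ (Finset.univ.erase i).erase z, (y j) ^ 2 := by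
    apply Finset.sum_congr rfl
    intro j hj
    rw [Finset.mem_erase] at hj
    have hji := (Finset.mem_erase.1 hj.2).1
    rw [rotMap_apply_other hj.1 hji]
  rw [hrest, rotMap_apply_z hzi, rotMap_apply_i hzi]
  have h5 := Real.sin_sq_add_cos_sq θ
  linear_combination (y z ^ 2 + y i ^ 2) * h5

noncomputable def rotLie (z i : Fin n) (hzi : i ≠ z) (θ : ℝ) :
    EuclideanSpace ℝ (Fin n) ≃ₗᵢ[ℝ] EuclideanSpace ℝ (Fin n) where
  toLinearEquiv :=
    { toFun := rotMap z i θ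
      invFun := rotMap z i (-θ)
      map_add' := by
        intro x y
        ext j
        simp only [rotMap, PiLp.add_apply, PiLp.toLp_apply]
        split_ifs <;> ring
      map_smul' := by
        intro c y
        ext j
        simp only [rotMap, PiLp.smul_apply, smul_eq_mul, RingHom.id_apply, PiLp.toLp_apply]
        split_ifs <;> ring
      left_inv := rotMap_inv hzi θ
      right_inv := fun y => by
        have h := rotMap_inv hzi (-θ) y
        rwa [neg_neg] at h }
  norm_map' := by
    intro y
    rw [EuclideanSpace.norm_eq, EuclideanSpace.norm_eq]
    congr 1
    simp only [Real.norm_eq_abs, sq_abs]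
    exact rotMap_sum_sq hzi θ y

lemma rotLie_preimage_sphere {z i : Fin n} (hzi : i ≠ z) (θ : ℝ) (r : ℝ) :
    (rotLie z i hzi θ) ⁻¹' (sphere (0 : EuclideanSpace ℝ (Fin n)) r)
      = sphere (0 : EuclideanSpace ℝ (Fin n)) r := by
  ext y
  simp only [Set.mem_preimage, mem_sphere_iff_norm, sub_zero]
  rw [(rotLie z i hzi θ).norm_map]

end Rot

lemma II_abs_cos_any {p : ℝ} (hp : 1 < p) (a b : ℝ) :
    IntervalIntegrable (fun θ : ℝ => |Real.cos θ| ^ (p - 2)) MeasureTheory.volume a b := by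
  have hπ := Real.pi_pos
  have hper : ∀ k : ℤ, IntervalIntegrable (fun θ : ℝ => |Real.cos θ| ^ (p - 2))
      MeasureTheory.volume ((k:ℝ)*(2*π)) ((k:ℝ)*(2*π) + 2*π) := by
    intro k
    have h2 := (II_abs_cos hp).comp_sub_right ((k:ℝ)*(2*π))
    have heq : (fun x : ℝ => |Real.cos (x - (k:ℝ)*(2*π))| ^ (p - 2))
        = fun θ : ℝ => |Real.cos θ| ^ (p - 2) := by
      funext x
      rw [Real.cos_sub_int_mul_two_pi]
    simp only [heq] at h2
    rw [zero_add] at h2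
    have hb : 2*π + (k:ℝ)*(2*π) = (k:ℝ)*(2*π) + 2*π := by ring
    rwa [hb] at h2
  have chain : ∀ n : ℕ, IntervalIntegrable (fun θ : ℝ => |Real.cos θ| ^ (p - 2))
      MeasureTheory.volume (-(n:ℝ)*(2*π)) ((n:ℝ)*(2*π)) := by
    intro n
    induction n with
    | zero =>
      simp only [Nat.cast_zero, neg_zero, zero_mul]
      exact IntervalIntegrable.refl
    | succ n ih =>
      have hl' := hper (-(n+1) : ℤ)
      have hr' := hper (n : ℤ)
      push_cast at hl' hr' ⊢
      ring_nf at hl' hr' ih ⊢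
      exact (hl'.trans ih).trans hr'
  obtain ⟨n, hn⟩ := exists_nat_ge ((max |a| |b|) / (2*π))
  have hmax : max |a| |b| ≤ (n:ℝ)*(2*π) := by
    rw [div_le_iff₀ (by linarith)] at hn
    linarith
  have ha : |a| ≤ (n:ℝ)*(2*π) := le_trans (le_max_left _ _) hmax
  have hb : |b| ≤ (n:ℝ)*(2*π) := le_trans (le_max_right _ _) hmax
  apply (chain n).mono_set
  have h1 : -(n:ℝ)*(2*π) ≤ (n:ℝ)*(2*π) := by nlinarith [Nat.cast_nonneg (α := ℝ) n]
  apply Set.uIcc_subset_uIcc <;> rw [Set.uIcc_of_le h1] <;> constructor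
  · linarith [neg_abs_le a, le_abs_self a]
  · linarith [le_abs_self a]
  · linarith [neg_abs_le b]
  · linarith [le_abs_self b]

lemma II_W_any {p : ℝ} (hp : 1 < p) (a b : ℝ) :
    IntervalIntegrable (fun θ : ℝ => |Real.cos θ| ^ (p - 2) * Real.sin θ ^ 2)
      MeasureTheory.volume a b := by
  apply (II_abs_cos_any hp a b).mono_fun
    (((measurable_abs_cos_rpow p).mul
      ((Real.continuous_sin.measurable).pow_const 2)).aestronglyMeasurable)
  filter_upwards with θ
  simp only [Pi.mul_apply]
  rw [Real.norm_eq_abs, Real.norm_eq_abs, abs_of_nonneg (Real.rpow_nonneg (abs_nonneg _) _),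
    abs_of_nonneg (by positivity : (0:ℝ) ≤ |Real.cos θ| ^ (p-2) * Real.sin θ ^ 2)]
  have h1 : Real.sin θ ^ 2 ≤ 1 := Real.sin_sq_le_one θ
  have h2 : (0:ℝ) ≤ |Real.cos θ| ^ (p-2) := Real.rpow_nonneg (abs_nonneg _) _
  nlinarith

lemma II_W_shift {p : ℝ} (hp : 1 < p) (φ : ℝ) :
    IntervalIntegrable (fun θ : ℝ => |Real.cos (θ + φ)| ^ (p - 2) * Real.sin (θ + φ) ^ 2)
      MeasureTheory.volume 0 (2*π) := by
  have h := (II_W_any hp φ (2*π + φ)).comp_add_right φ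
  simpa using h

lemma rot_map_measure {n : ℕ} {z i : Fin n} (hzi : i ≠ z) (θ : ℝ) (r s : ℝ) :
    MeasureTheory.Measure.map (rotLie z i hzi θ)
        (μH[s].restrict (sphere (0 : EuclideanSpace ℝ (Fin n)) r))
      = μH[s].restrict (sphere (0 : EuclideanSpace ℝ (Fin n)) r) := by
  have hmeas : Measurable (rotLie z i hzi θ) :=
    (rotLie z i hzi θ).continuous.measurable
  have hS : MeasurableSet (sphere (0 : EuclideanSpace ℝ (Fin n)) r) :=
    Metric.isClosed_sphere.measurableSet
  have h1 : MeasureTheory.Measure.map (rotLie z i hzi θ) (μH[s]) = μH[s] := by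
    have h2 := (rotLie z i hzi θ).toIsometryEquiv.map_hausdorffMeasure s
    exact h2
  conv_lhs => rw [show sphere (0 : EuclideanSpace ℝ (Fin n)) r
    = (rotLie z i hzi θ) ⁻¹' (sphere (0 : EuclideanSpace ℝ (Fin n)) r) from
      (rotLie_preimage_sphere hzi θ r).symm]
  rw [← MeasureTheory.Measure.restrict_map hmeas hS, h1]

lemma rotLie_apply {n : ℕ} {z i : Fin n} (hzi : i ≠ z) (θ : ℝ)
    (y : EuclideanSpace ℝ (Fin n)) : rotLie z i hzi θ y = rotMap z i θ y := rfl

lemma cont_coord {n : ℕ} (j : Fin n) : Continuous fun y : EuclideanSpace ℝ (Fin n) => y j :=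
  PiLp.continuous_apply 2 _ j

lemma cont_abs_rpow {q : ℝ} (hq : 0 ≤ q) {α : Type*} [TopologicalSpace α] {f : α → ℝ}
    (hf : Continuous f) : Continuous fun x => |f x| ^ q := by
  rw [continuous_iff_continuousAt]
  intro x
  exact (Real.continuousAt_rpow_const _ _ (Or.inr hq)).comp (hf.abs.continuousAt)

lemma sum_two_le {n : ℕ} {z i : Fin n} (hzi : i ≠ z) (f : Fin n → ℝ)
    (hf : ∀ j, 0 ≤ f j) : f z + f i ≤ ∑ j, f j := by
  classical
  have h1 : ({z, i} : Finset (Fin n)) ⊆ Finset.univ := Finset.subset_univ _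
  have h2 := Finset.sum_le_sum_of_subset_of_nonneg h1 (fun j _ _ => hf j)
  rwa [Finset.sum_pair (fun h => hzi h.symm)] at h2

lemma core {d : ℕ} (z i : Fin d) (hzi : i ≠ z) {p r : ℝ} (hp : 1 < p) (hr : 0 < r)
    (hfin : μH[(d:ℝ)-1] (sphere (0 : EuclideanSpace ℝ (Fin d)) r) ≠ ⊤) :
    ∫ y in sphere (0 : EuclideanSpace ℝ (Fin d)) r, |y z| ^ p ∂(μH[(d:ℝ)-1])
      = (p-1) * ∫ y in sphere (0 : EuclideanSpace ℝ (Fin d)) r,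
          |y z| ^ (p-2) * (y i)^2 ∂(μH[(d:ℝ)-1]) := by
  classical
  have hπ := Real.pi_pos
  set E := EuclideanSpace ℝ (Fin d) with hE
  set μ : MeasureTheory.Measure E := μH[(d:ℝ)-1] with hμ
  set S : Set E := sphere (0 : E) r with hSdef
  have hS : MeasurableSet S := Metric.isClosed_sphere.measurableSet
  set σ : MeasureTheory.Measure E := μ.restrict S with hσ
  haveI hfinσ : MeasureTheory.IsFiniteMeasure σ := by
    constructor
    rw [hσ, MeasureTheory.Measure.restrict_apply_univ, lt_top_iff_ne_top]
    exact hfin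
  -- basic measurability
  have hmz : Measurable fun y : E => y z := (cont_coord z).measurable
  have hmi : Measurable fun y : E => y i := (cont_coord i).measurable
  have hmF : Measurable fun y : E => ENNReal.ofReal (|y z| ^ p) :=
    ((hmz.abs.pow_const p)).ennreal_ofReal
  have hmG : Measurable fun y : E => ENNReal.ofReal (|y z| ^ (p-2) * (y i)^2) :=
    ((hmz.abs.pow_const (p-2)).mul (hmi.pow_const 2)).ennreal_ofReal
  -- the 1D integrals
  set A : ℝ := ∫ θ in (0:ℝ)..(2*π), |Real.cos θ| ^ p with hA
  set B : ℝ := ∫ θ in (0:ℝ)..(2*π), |Real.cos θ| ^ (p-2) * Real.sin θ ^ 2 with hB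
  have hA0 : 0 ≤ A := intervalIntegral.integral_nonneg (by linarith)
    (fun x _ => by positivity)
  have hB0 : 0 ≤ B := intervalIntegral.integral_nonneg (by linarith)
    (fun x _ => by positivity)
  have hAB : A = (p-1) * B := key1d hp
  -- radial function
  set ρfn : E → ℝ := fun y => Real.sqrt ((y z)^2 + (y i)^2) with hρfn
  have hmρ : Measurable fun y : E => ENNReal.ofReal (ρfn y ^ p) :=
    (((hmz.pow_const 2).add (hmi.pow_const 2)).sqrt.pow_const p).ennreal_ofReal
  set J : ENNReal := ∫⁻ y, ENNReal.ofReal (ρfn y ^ p) ∂σ with hJ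
  -- rotation invariance
  have rotF : ∀ θ : ℝ, ∫⁻ y, ENNReal.ofReal
      (|Real.cos θ * y z - Real.sin θ * y i| ^ p) ∂σ
      = ∫⁻ y, ENNReal.ofReal (|y z| ^ p) ∂σ := by
    intro θ
    conv_rhs => rw [hσ, hSdef, hμ, ← rot_map_measure hzi θ r ((d:ℝ)-1)]
    rw [MeasureTheory.lintegral_map hmF (rotLie z i hzi θ).continuous.measurable]
    congr 1
    funext y
    rw [rotLie_apply, rotMap_apply_z hzi]
  have rotG : ∀ θ : ℝ, ∫⁻ y, ENNReal.ofReal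
      (|Real.cos θ * y z - Real.sin θ * y i| ^ (p-2)
        * (Real.sin θ * y z + Real.cos θ * y i)^2) ∂σ
      = ∫⁻ y, ENNReal.ofReal (|y z| ^ (p-2) * (y i)^2) ∂σ := by
    intro θ
    conv_rhs => rw [hσ, hSdef, hμ, ← rot_map_measure hzi θ r ((d:ℝ)-1)]
    rw [MeasureTheory.lintegral_map hmG (rotLie z i hzi θ).continuous.measurable]
    congr 1
    funext y
    rw [rotLie_apply, rotMap_apply_z hzi, rotMap_apply_i hzi]
  -- inner 1D evaluations
  have inner1 : ∀ y : E, (∫⁻ θ in Set.Ioc (0:ℝ) (2*π),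
      ENNReal.ofReal (|Real.cos θ * y z - Real.sin θ * y i| ^ p))
      = ENNReal.ofReal (A * ρfn y ^ p) := by
    intro y
    obtain ⟨φ, hφ1, hφ2⟩ := polar (y z) (y i)
    have hρ0 : 0 ≤ ρfn y := Real.sqrt_nonneg _
    have hfuneq : ∀ θ : ℝ, |Real.cos θ * y z - Real.sin θ * y i| ^ p
        = |ρfn y * Real.cos (θ + φ)| ^ p := by
      intro θ
      congr 2
      rw [Real.cos_add]
      simp only [hρfn]
      linear_combination Real.cos θ * hφ1 - Real.sin θ * hφ2
    simp_rw [hfuneq]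
    have hcontf : Continuous fun θ : ℝ => |ρfn y * Real.cos (θ + φ)| ^ p :=
      cont_abs_rpow (by linarith)
        (continuous_const.mul (Real.continuous_cos.comp (continuous_add_right φ)))
    rw [← MeasureTheory.ofReal_integral_eq_lintegral_ofReal
      (hcontf.integrableOn_Ioc) (MeasureTheory.ae_of_all _ (fun θ => by positivity))]
    congr 1
    rw [← intervalIntegral.integral_of_le (by linarith : (0:ℝ) ≤ 2*π), shiftA hp hρ0 φ]
    ring
  have inner2 : ∀ y : E, (∫⁻ θ in Set.Ioc (0:ℝ) (2*π),
      ENNReal.ofReal (|Real.cos θ * y z - Real.sin θ * y i| ^ (p-2)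
        * (Real.sin θ * y z + Real.cos θ * y i)^2))
      = ENNReal.ofReal (B * ρfn y ^ p) := by
    intro y
    obtain ⟨φ, hφ1, hφ2⟩ := polar (y z) (y i)
    have hρ0 : 0 ≤ ρfn y := Real.sqrt_nonneg _
    have hfuneq : ∀ θ : ℝ, |Real.cos θ * y z - Real.sin θ * y i| ^ (p-2)
          * (Real.sin θ * y z + Real.cos θ * y i)^2
        = |ρfn y * Real.cos (θ + φ)| ^ (p-2)
          * (ρfn y * Real.sin (θ + φ))^2 := by
      intro θ
      have e1 : Real.cos θ * y z - Real.sin θ * y i = ρfn y * Real.cos (θ + φ) := by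
        rw [Real.cos_add]
        simp only [hρfn]
        linear_combination Real.cos θ * hφ1 - Real.sin θ * hφ2
      have e2 : Real.sin θ * y z + Real.cos θ * y i = ρfn y * Real.sin (θ + φ) := by
        rw [Real.sin_add]
        simp only [hρfn]
        linear_combination Real.sin θ * hφ1 + Real.cos θ * hφ2
      rw [e1, e2]
    simp_rw [hfuneq]
    have hIoc : MeasureTheory.IntegrableOn
        (fun θ : ℝ => |ρfn y * Real.cos (θ + φ)| ^ (p-2) * (ρfn y * Real.sin (θ + φ))^2)
        (Set.Ioc (0:ℝ) (2*π)) MeasureTheory.volume := by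
      have heq2 : (fun θ : ℝ => |ρfn y * Real.cos (θ + φ)| ^ (p-2)
          * (ρfn y * Real.sin (θ + φ))^2)
          = fun θ : ℝ => ρfn y ^ p * (|Real.cos (θ + φ)| ^ (p-2) * Real.sin (θ + φ)^2) := by
        funext θ
        exact pointB hp hρ0 _ _
      rw [heq2]
      have h3 := ((II_W_shift hp φ).const_mul (ρfn y ^ p))
      rw [intervalIntegrable_iff_integrableOn_Ioc_of_le (by linarith : (0:ℝ) ≤ 2*π)] at h3
      exact h3
    rw [← MeasureTheory.ofReal_integral_eq_lintegral_ofReal hIoc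
      (MeasureTheory.ae_of_all _ (fun θ => by positivity))]
    congr 1
    rw [← intervalIntegral.integral_of_le (by linarith : (0:ℝ) ≤ 2*π), shiftB hp hρ0 φ]
    ring
  -- Fubini, F side
  have huncF : Measurable (Function.uncurry fun (θ : ℝ) (y : E) =>
      ENNReal.ofReal (|Real.cos θ * y z - Real.sin θ * y i| ^ p)) := by
    apply Measurable.ennreal_ofReal
    apply Measurable.pow_const
    apply Measurable.abs
    exact ((Real.continuous_cos.comp continuous_fst).measurable.mul
        (hmz.comp measurable_snd)).sub
      ((Real.continuous_sin.comp continuous_fst).measurable.mul (hmi.comp measurable_snd))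
  have huncG : Measurable (Function.uncurry fun (θ : ℝ) (y : E) =>
      ENNReal.ofReal (|Real.cos θ * y z - Real.sin θ * y i| ^ (p-2)
        * (Real.sin θ * y z + Real.cos θ * y i)^2)) := by
    apply Measurable.ennreal_ofReal
    apply Measurable.mul
    · apply Measurable.pow_const
      apply Measurable.abs
      exact ((Real.continuous_cos.comp continuous_fst).measurable.mul
          (hmz.comp measurable_snd)).sub
        ((Real.continuous_sin.comp continuous_fst).measurable.mul (hmi.comp measurable_snd))
    · apply Measurable.pow_const
      exact ((Real.continuous_sin.comp continuous_fst).measurable.mul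
          (hmz.comp measurable_snd)).add
        ((Real.continuous_cos.comp continuous_fst).measurable.mul (hmi.comp measurable_snd))
  have EQ1 : ENNReal.ofReal (2*π) * (∫⁻ y, ENNReal.ofReal (|y z| ^ p) ∂σ)
      = ENNReal.ofReal A * J := by
    have hlhs : ∫⁻ θ in Set.Ioc (0:ℝ) (2*π), (∫⁻ y, ENNReal.ofReal
        (|Real.cos θ * y z - Real.sin θ * y i| ^ p) ∂σ)
        = ENNReal.ofReal (2*π) * (∫⁻ y, ENNReal.ofReal (|y z| ^ p) ∂σ) := by
      rw [MeasureTheory.setLIntegral_congr_fun measurableSet_Ioc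
        (fun θ _ => rotF θ)]
      rw [MeasureTheory.setLIntegral_const, Real.volume_Ioc, mul_comm]
      norm_num
    have hswap := MeasureTheory.lintegral_lintegral_swap
      (μ := MeasureTheory.volume.restrict (Set.Ioc (0:ℝ) (2*π))) (ν := σ)
      huncF.aemeasurable
    rw [← hlhs, hswap]
    calc ∫⁻ y, (∫⁻ θ in Set.Ioc (0:ℝ) (2*π), ENNReal.ofReal
          (|Real.cos θ * y z - Real.sin θ * y i| ^ p)) ∂σ
        = ∫⁻ y, ENNReal.ofReal (A * ρfn y ^ p) ∂σ := by
          congr 1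
          funext y
          exact inner1 y
      _ = ∫⁻ y, ENNReal.ofReal A * ENNReal.ofReal (ρfn y ^ p) ∂σ := by
          congr 1
          funext y
          rw [ENNReal.ofReal_mul hA0]
      _ = ENNReal.ofReal A * J := MeasureTheory.lintegral_const_mul _ hmρ
  have EQ2 : ENNReal.ofReal (2*π) * (∫⁻ y, ENNReal.ofReal (|y z| ^ (p-2) * (y i)^2) ∂σ)
      = ENNReal.ofReal B * J := by
    have hlhs : ∫⁻ θ in Set.Ioc (0:ℝ) (2*π), (∫⁻ y, ENNReal.ofReal
        (|Real.cos θ * y z - Real.sin θ * y i| ^ (p-2)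
          * (Real.sin θ * y z + Real.cos θ * y i)^2) ∂σ)
        = ENNReal.ofReal (2*π) * (∫⁻ y, ENNReal.ofReal (|y z| ^ (p-2) * (y i)^2) ∂σ) := by
      rw [MeasureTheory.setLIntegral_congr_fun measurableSet_Ioc
        (fun θ _ => rotG θ)]
      rw [MeasureTheory.setLIntegral_const, Real.volume_Ioc, mul_comm]
      norm_num
    have hswap := MeasureTheory.lintegral_lintegral_swap
      (μ := MeasureTheory.volume.restrict (Set.Ioc (0:ℝ) (2*π))) (ν := σ)
      huncG.aemeasurable
    rw [← hlhs, hswap]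
    calc ∫⁻ y, (∫⁻ θ in Set.Ioc (0:ℝ) (2*π), ENNReal.ofReal
          (|Real.cos θ * y z - Real.sin θ * y i| ^ (p-2)
            * (Real.sin θ * y z + Real.cos θ * y i)^2)) ∂σ
        = ∫⁻ y, ENNReal.ofReal (B * ρfn y ^ p) ∂σ := by
          congr 1
          funext y
          exact inner2 y
      _ = ∫⁻ y, ENNReal.ofReal B * ENNReal.ofReal (ρfn y ^ p) ∂σ := by
          congr 1
          funext y
          rw [ENNReal.ofReal_mul hB0]
      _ = ENNReal.ofReal B * J := MeasureTheory.lintegral_const_mul _ hmρ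
  -- finiteness of lintegral of F
  have coordbound : ∀ y : E, y ∈ S → (y z)^2 + (y i)^2 ≤ r^2 := by
    intro y hy
    have hnorm : ‖y‖ = r := by
      rwa [hSdef, mem_sphere_iff_norm, sub_zero] at hy
    have h1 : ‖y‖ = Real.sqrt (∑ j, ‖y j‖^2) := EuclideanSpace.norm_eq y
    have h2 : r^2 = ∑ j, (y j)^2 := by
      rw [← hnorm, h1, Real.sq_sqrt (by positivity)]
      congr 1
      funext j
      rw [Real.norm_eq_abs, sq_abs]
    rw [h2]
    exact sum_two_le hzi (fun j => (y j)^2) (fun j => sq_nonneg _)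
  have hFtop : (∫⁻ y, ENNReal.ofReal (|y z| ^ p) ∂σ) ≠ ⊤ := by
    have hb : ∀ y ∈ S, ENNReal.ofReal (|y z| ^ p) ≤ ENNReal.ofReal (r ^ p) := by
      intro y hy
      apply ENNReal.ofReal_le_ofReal
      apply Real.rpow_le_rpow (abs_nonneg _) _ (by linarith)
      have := coordbound y hy
      nlinarith [sq_nonneg (y i), abs_nonneg (y z), sq_abs (y z), hr.le]
    have h3 : (∫⁻ y, ENNReal.ofReal (|y z| ^ p) ∂σ)
        ≤ ENNReal.ofReal (r ^ p) * μ S := by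
      rw [hσ]
      calc ∫⁻ y in S, ENNReal.ofReal (|y z| ^ p) ∂μ
          ≤ ∫⁻ _ in S, ENNReal.ofReal (r ^ p) ∂μ :=
            MeasureTheory.setLIntegral_mono' hS hb
        _ = ENNReal.ofReal (r ^ p) * μ S := MeasureTheory.setLIntegral_const _ _
    exact ne_top_of_le_ne_top (ENNReal.mul_ne_top ENNReal.ofReal_ne_top hfin) h3
  -- key identity in ℝ≥0∞
  have hkey : (∫⁻ y, ENNReal.ofReal (|y z| ^ p) ∂σ)
      = ENNReal.ofReal (p-1) * (∫⁻ y, ENNReal.ofReal (|y z| ^ (p-2) * (y i)^2) ∂σ) := by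
    have h2π0 : ENNReal.ofReal (2*π) ≠ 0 := by
      simp only [ne_eq, ENNReal.ofReal_eq_zero, not_le]
      linarith
    rw [← ENNReal.mul_right_inj h2π0 ENNReal.ofReal_ne_top]
    rw [EQ1, hAB, ENNReal.ofReal_mul (by linarith : (0:ℝ) ≤ p-1), mul_assoc, ← EQ2]
    ring
  have hGtop : (∫⁻ y, ENNReal.ofReal (|y z| ^ (p-2) * (y i)^2) ∂σ) ≠ ⊤ := by
    intro hcon
    rw [hcon, ENNReal.mul_top (by
      simp only [ne_eq, ENNReal.ofReal_eq_zero, not_le]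
      linarith)] at hkey
    exact hFtop hkey
  -- back to Bochner integrals
  have hFB : ∫ y in S, |y z| ^ p ∂μ = (∫⁻ y, ENNReal.ofReal (|y z| ^ p) ∂σ).toReal := by
    rw [← hσ]
    exact MeasureTheory.integral_eq_lintegral_of_nonneg_ae
      (MeasureTheory.ae_of_all _ (fun y => by positivity))
      ((hmz.abs.pow_const p).aestronglyMeasurable)
  have hGB : ∫ y in S, |y z| ^ (p-2) * (y i)^2 ∂μ
      = (∫⁻ y, ENNReal.ofReal (|y z| ^ (p-2) * (y i)^2) ∂σ).toReal := by
    rw [← hσ]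
    exact MeasureTheory.integral_eq_lintegral_of_nonneg_ae
      (MeasureTheory.ae_of_all _ (fun y => by positivity))
      (((hmz.abs.pow_const (p-2)).mul (hmi.pow_const 2)).aestronglyMeasurable)
  rw [hFB, hGB, hkey, ENNReal.toReal_mul, ENNReal.toReal_ofReal (by linarith : (0:ℝ) ≤ p-1)]

end Stmt5

theorem stmt_5 (d : ℕ) (hd : 2 ≤ d) (p r : ℝ) (hp : 1 < p) (hr : 0 < r)
    (i : Fin d) (hi : i ≠ ⟨0, by omega⟩) :
    (1 / 2) * ⨍ y in sphere (0 : EuclideanSpace ℝ (Fin d)) r,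
        |y ⟨0, by omega⟩| ^ p ∂μH[(d : ℝ) - 1]
      = ((p - 1) / 2) * ⨍ y in sphere (0 : EuclideanSpace ℝ (Fin d)) r,
        |y ⟨0, by omega⟩| ^ (p - 2) * (y i) ^ 2 ∂μH[(d : ℝ) - 1] := by
  rw [MeasureTheory.setAverage_eq, MeasureTheory.setAverage_eq]
  rcases eq_or_ne (μH[(d:ℝ)-1] (sphere (0 : EuclideanSpace ℝ (Fin d)) r)) ⊤ with htop | hfin
  · rw [MeasureTheory.measureReal_def, htop]
    simp
  · rw [Stmt5.core ⟨0, by omega⟩ i hi hp hr hfin]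
    rw [smul_eq_mul, smul_eq_mul]
    ring
end

section
/- Let p ∈ (1,∞), α, β > 0, C > 0, ε ∈ ℝ with |ε| < 1/(2n+1) for an integer n ≥ 1, and define 𝔄̃(re^{iθ}) = C r^α cos((n+1)θ) in polar coordinates on ℝ² ≅ ℂ, m(θ) = √(1 + ε² + 2ε cos(2(n+1)θ)), and j(θ) = 1 − (2n+1)ε² − 2nε cos(2(n+1)θ). Then for every R > 0, ∫₀^{2π} ∫₀^{r(θ)} r^{α(p−1)+2β−1} |cos((n+1)θ)|^{p−2} cos((n+1)θ) j(θ) dr dθ = 0, where r(θ) = (R/m(θ))^{1/β}. -/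
open Real

theorem stmt_12 (n : ℕ) (hn : 1 ≤ n) (p α β C ε R : ℝ)
    (hp : 1 < p) (hα : 0 < α) (hβ : 0 < β) (hC : 0 < C)
    (hε : |ε| < 1 / (2 * (n : ℝ) + 1)) (hR : 0 < R) :
    ∫ θ in (0 : ℝ)..(2 * π),
      ∫ r in (0 : ℝ)..((R / Real.sqrt (1 + ε ^ 2 + 2 * ε * Real.cos (2 * ((n : ℝ) + 1) * θ))) ^ (1 / β)),
        r ^ (α * (p - 1) + 2 * β - 1) *
          (|Real.cos (((n : ℝ) + 1) * θ)| ^ (p - 2) * Real.cos (((n : ℝ) + 1) * θ)) *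
          (1 - (2 * (n : ℝ) + 1) * ε ^ 2 - 2 * (n : ℝ) * ε * Real.cos (2 * ((n : ℝ) + 1) * θ))
      = 0 := by
  set s : ℝ := α * (p - 1) + 2 * β - 1 with hs
  have hs1 : s + 1 = α * (p - 1) + 2 * β := by ring
  have hspos : (0:ℝ) < s + 1 := by
    rw [hs1]
    have h1 : 0 < α * (p - 1) := mul_pos hα (by linarith)
    linarith
  set G : ℝ → ℝ := fun θ =>
    ((R / Real.sqrt (1 + ε ^ 2 + 2 * ε * Real.cos (2 * ((n : ℝ) + 1) * θ))) ^ (1 / β)) ^ (s+1) / (s+1) *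
      ((|Real.cos (((n : ℝ) + 1) * θ)| ^ (p - 2) * Real.cos (((n : ℝ) + 1) * θ)) *
       (1 - (2 * (n : ℝ) + 1) * ε ^ 2 - 2 * (n : ℝ) * ε * Real.cos (2 * ((n : ℝ) + 1) * θ))) with hG
  have hinner : ∀ θ : ℝ,
      (∫ r in (0 : ℝ)..((R / Real.sqrt (1 + ε ^ 2 + 2 * ε * Real.cos (2 * ((n : ℝ) + 1) * θ))) ^ (1 / β)),
        r ^ s *
          (|Real.cos (((n : ℝ) + 1) * θ)| ^ (p - 2) * Real.cos (((n : ℝ) + 1) * θ)) *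
          (1 - (2 * (n : ℝ) + 1) * ε ^ 2 - 2 * (n : ℝ) * ε * Real.cos (2 * ((n : ℝ) + 1) * θ)))
      = G θ := by
    intro θ
    have : ∀ r : ℝ, r ^ s *
          (|Real.cos (((n : ℝ) + 1) * θ)| ^ (p - 2) * Real.cos (((n : ℝ) + 1) * θ)) *
          (1 - (2 * (n : ℝ) + 1) * ε ^ 2 - 2 * (n : ℝ) * ε * Real.cos (2 * ((n : ℝ) + 1) * θ))
        = r ^ s * ((|Real.cos (((n : ℝ) + 1) * θ)| ^ (p - 2) * Real.cos (((n : ℝ) + 1) * θ)) *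
          (1 - (2 * (n : ℝ) + 1) * ε ^ 2 - 2 * (n : ℝ) * ε * Real.cos (2 * ((n : ℝ) + 1) * θ))) := by
      intro r; ring
    simp only [this]
    rw [intervalIntegral.integral_mul_const, integral_rpow (Or.inl (by linarith))]
    rw [Real.zero_rpow (by linarith)]
    simp [hG]
  simp only [hinner]
  -- now prove ∫ θ in 0..2π, G θ = 0
  set c : ℝ := π / ((n:ℝ) + 1) with hc
  have hn1 : ((n:ℝ) + 1) ≠ 0 := by positivity
  have hanti : ∀ θ : ℝ, G (θ + c) = - G θ := by
    intro θ
    have h1 : ((n:ℝ) + 1) * (θ + c) = ((n:ℝ) + 1) * θ + π := by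
      field_simp [hc]
      have hnc : ((n:ℝ) + 1) * c = π := by rw [hc]; field_simp
      linear_combination hnc
    have h2 : 2 * ((n:ℝ) + 1) * (θ + c) = 2 * ((n:ℝ) + 1) * θ + 2 * π := by
      field_simp [hc]
      have hnc : ((n:ℝ) + 1) * c = π := by rw [hc]; field_simp
      linear_combination hnc
    simp only [hG, h1, h2, Real.cos_add_pi, Real.cos_add_two_pi, abs_neg]
    ring
  have hper : Function.Periodic G (2 * π) := by
    intro θ
    have h1 : ((n:ℝ) + 1) * (θ + 2 * π) = ((n:ℝ) + 1) * θ + ((n+1 : ℕ):ℝ) * (2 * π) := by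
      push_cast; ring
    have h2 : 2 * ((n:ℝ) + 1) * (θ + 2 * π) = 2 * ((n:ℝ) + 1) * θ + ((2*(n+1) : ℕ):ℝ) * (2 * π) := by
      push_cast; ring
    simp only [hG, h1, h2, Real.cos_add_nat_mul_two_pi]
  have key : (∫ θ in (0:ℝ)..(2*π), G θ) = - ∫ θ in (0:ℝ)..(2*π), G θ := by
    calc (∫ θ in (0:ℝ)..(2*π), G θ)
        = ∫ θ in c..(c + 2*π), G θ := by simpa using hper.intervalIntegral_add_eq 0 c
      _ = ∫ θ in (0:ℝ)..(2*π), G (θ + c) := by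
          rw [intervalIntegral.integral_comp_add_right]
          norm_num [add_comm]
      _ = - ∫ θ in (0:ℝ)..(2*π), G θ := by
          simp only [hanti]
          exact intervalIntegral.integral_neg
  linarith [key]
end

section
/- Let p ∈ (1,∞), d ≥ 1, and r > 0. Define for bounded measurable functions U, V on Ω_r = Ω ∪ ∂Ω_r (Ω ⊂ ℝ^d bounded open, ∂Ω_r = {x ∉ Ω : dist(x,Ω) ≤ r}) the operator M^p[W](x) = (1/(D_{d,p}r^p)) ⨍_{B_r} J_p(W(x+y)−W(x)) dy for x ∈ Ω. Suppose −M^p[V](x) ≥ f(x) and −M^p[U](x) ≤ f(x) for all x ∈ Ω, and V ≥ G ≥ U on ∂Ω_r, for some functions f on Ω and G on ∂Ω_r. Then U ≤ V on Ω_r. -/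
open Real

noncomputable def Jf (p t : ℝ) : ℝ := |t| ^ (p-2) * t

lemma Jf_nonneg_eq {p : ℝ} (hp : 1 < p) {t : ℝ} (ht : 0 ≤ t) : Jf p t = t ^ (p-1) := by
  rcases eq_or_lt_of_le ht with h | h
  · simp [Jf, ← h, Real.zero_rpow (by linarith : p - 1 ≠ 0)]
  · rw [Jf, abs_of_pos h, show p-1 = (p-2)+1 by ring, Real.rpow_add_one h.ne']

lemma Jf_odd (p t : ℝ) : Jf p (-t) = - Jf p t := by
  simp only [Jf, abs_neg]; ring

lemma Jf_neg_eq {p : ℝ} (hp : 1 < p) {t : ℝ} (ht : t ≤ 0) : Jf p t = -((-t) ^ (p-1)) := by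
  have := Jf_odd p (-t)
  rw [neg_neg] at this
  rw [this, Jf_nonneg_eq hp (by linarith : (0:ℝ) ≤ -t)]

lemma Jf_strictMono {p : ℝ} (hp : 1 < p) : StrictMono (Jf p) := by
  intro a b hab
  have hp1 : 0 < p - 1 := by linarith
  rcases le_or_gt 0 a with ha | ha
  · rw [Jf_nonneg_eq hp ha, Jf_nonneg_eq hp (le_of_lt (lt_of_le_of_lt ha hab))]
    exact Real.rpow_lt_rpow ha hab hp1
  · rcases le_or_gt 0 b with hb | hb
    · rw [Jf_neg_eq hp ha.le, Jf_nonneg_eq hp hb]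
      have h1 : (0:ℝ) < (-a) ^ (p-1) := Real.rpow_pos_of_pos (by linarith) _
      have h2 : (0:ℝ) ≤ b ^ (p-1) := Real.rpow_nonneg hb _
      linarith
    · rw [Jf_neg_eq hp ha.le, Jf_neg_eq hp hb.le]
      have := Real.rpow_lt_rpow (by linarith : (0:ℝ) ≤ -b) (by linarith : -b < -a) hp1
      linarith

lemma Jf_abs {p : ℝ} (hp : 1 < p) (t : ℝ) : |Jf p t| = |t| ^ (p-1) := by
  rcases le_or_gt 0 t with ht | ht
  · rw [Jf_nonneg_eq hp ht, abs_of_nonneg (Real.rpow_nonneg ht _), abs_of_nonneg ht]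
  · rw [Jf_neg_eq hp ht.le, abs_neg, abs_of_nonneg (Real.rpow_nonneg (by linarith) _),
      abs_of_neg ht]

lemma Jf_continuous {p : ℝ} (hp : 1 < p) : Continuous (Jf p) := by
  rw [continuous_iff_continuousAt]
  intro t₀
  rcases eq_or_ne t₀ 0 with rfl | ht₀
  · have hJ0 : Jf p 0 = 0 := by simp [Jf]
    rw [ContinuousAt, hJ0]
    have hg : ContinuousAt (fun t : ℝ => |t| ^ (p-1)) 0 := by
      exact (Real.continuousAt_rpow_const _ _ (Or.inr (by linarith))).comp
        continuous_abs.continuousAt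
    have hg0 : |(0:ℝ)| ^ (p-1) = 0 := by
      simp [Real.zero_rpow (by linarith : p - 1 ≠ 0)]
    have : Filter.Tendsto (fun t : ℝ => |t| ^ (p-1)) (nhds 0) (nhds 0) := by
      have h2 : Filter.Tendsto (fun t : ℝ => |t| ^ (p-1)) (nhds 0) (nhds (|(0:ℝ)| ^ (p-1))) := hg
      simpa [abs_zero, Real.zero_rpow (by linarith : p - 1 ≠ 0)] using h2
    exact squeeze_zero_norm (fun t => by rw [Real.norm_eq_abs, Jf_abs hp]) this
  · exact ((Real.continuousAt_rpow_const _ _ (Or.inl (abs_ne_zero.2 ht₀))).comp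
      continuous_abs.continuousAt).mul continuousAt_id

open MeasureTheory Metric

set_option maxHeartbeats 1000000 in
theorem stmt_14 (d : ℕ) (p r D : ℝ) (hp : 1 < p) (hd : 1 ≤ d) (hr : 0 < r) (hD : 0 < D)
    (Ω : Set (EuclideanSpace ℝ (Fin d))) (hΩo : IsOpen Ω) (hΩb : Bornology.IsBounded Ω)
    (U V f G : EuclideanSpace ℝ (Fin d) → ℝ)
    (hUm : Measurable U) (hVm : Measurable V)
    (hUb : ∃ M, ∀ x ∈ Ω ∪ {x | x ∉ Ω ∧ infDist x Ω ≤ r}, |U x| ≤ M)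
    (hVb : ∃ M, ∀ x ∈ Ω ∪ {x | x ∉ Ω ∧ infDist x Ω ≤ r}, |V x| ≤ M)
    (hVsuper : ∀ x ∈ Ω,
      -((1 / (D * r ^ p)) * ⨍ y in ball (0 : EuclideanSpace ℝ (Fin d)) r,
          |V (x + y) - V x| ^ (p - 2) * (V (x + y) - V x)) ≥ f x)
    (hUsub : ∀ x ∈ Ω,
      -((1 / (D * r ^ p)) * ⨍ y in ball (0 : EuclideanSpace ℝ (Fin d)) r,
          |U (x + y) - U x| ^ (p - 2) * (U (x + y) - U x)) ≤ f x)
    (hbdry : ∀ x ∈ {x | x ∉ Ω ∧ infDist x Ω ≤ r}, U x ≤ G x ∧ G x ≤ V x) :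
    ∀ x ∈ Ω ∪ {x | x ∉ Ω ∧ infDist x Ω ≤ r}, U x ≤ V x := by
  classical
  set Γ : Set (EuclideanSpace ℝ (Fin d)) := {x | x ∉ Ω ∧ infDist x Ω ≤ r} with hΓdef
  intro x hx
  rcases hx with hxΩ | hxΓ
  swap
  · exact le_trans (hbdry x hxΓ).1 (hbdry x hxΓ).2
  -- main case : x ∈ Ω
  obtain ⟨MU, hMU⟩ := hUb
  obtain ⟨MV, hMV⟩ := hVb
  set M : ℝ := max MU MV with hMdef
  have hM : ∀ z ∈ Ω ∪ Γ, |U z| ≤ M ∧ |V z| ≤ M := fun z hz =>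
    ⟨(hMU z hz).trans (le_max_left _ _), (hMV z hz).trans (le_max_right _ _)⟩
  have hM0 : 0 ≤ M := le_trans (abs_nonneg _) (hM x (Or.inl hxΩ)).1
  have himgne : ((fun z => U z - V z) '' (Ω ∪ Γ)).Nonempty :=
    ⟨_, ⟨x, Or.inl hxΩ, rfl⟩⟩
  have hbdd : BddAbove ((fun z => U z - V z) '' (Ω ∪ Γ)) := by
    refine ⟨2 * M, ?_⟩
    rintro w ⟨z, hz, rfl⟩
    have h1 := (hM z hz).1
    have h2 := (hM z hz).2
    have := abs_le.1 h1
    have := abs_le.1 h2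
    simp only
    linarith
  set S : ℝ := sSup ((fun z => U z - V z) '' (Ω ∪ Γ)) with hSdef
  have hSle : ∀ z ∈ Ω ∪ Γ, U z - V z ≤ S := fun z hz => le_csSup hbdd ⟨z, hz, rfl⟩
  suffices hS : S ≤ 0 by linarith [hSle x (Or.inl hxΩ)]
  by_contra hS0'
  push_neg at hS0'
  have hS0 : 0 < S := hS0'
  -- membership of displaced points
  have hmem : ∀ z ∈ Ω, ∀ y ∈ ball (0:EuclideanSpace ℝ (Fin d)) r, z + y ∈ Ω ∪ Γ := by
    intro z hz y hy
    by_cases h : z + y ∈ Ω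
    · exact Or.inl h
    · refine Or.inr ⟨h, ?_⟩
      have h1 : infDist (z + y) Ω ≤ dist (z + y) z := infDist_le_dist_of_mem hz
      have h2 : dist (z + y) z = ‖y‖ := by
        rw [dist_eq_norm]; congr 1; abel
      have h3 : ‖y‖ < r := by simpa [dist_zero_right] using mem_ball.1 hy
      linarith
  -- measure of the ball
  have hballpos : 0 < (volume (ball (0:EuclideanSpace ℝ (Fin d)) r)).toReal :=
    ENNReal.toReal_pos (measure_ball_pos volume 0 hr).ne' measure_ball_lt_top.ne
  -- integral form of the DPP inequality
  have hineq : ∀ z ∈ Ω,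
      (∫ y in ball (0:EuclideanSpace ℝ (Fin d)) r, Jf p (V (z + y) - V z)) ≤
        ∫ y in ball (0:EuclideanSpace ℝ (Fin d)) r, Jf p (U (z + y) - U z) := by
    intro z hz
    have h1 := hVsuper z hz
    have h2 := hUsub z hz
    have hc0 : 0 < 1 / (D * r ^ p) := by
      have hrp : (0:ℝ) < r ^ p := Real.rpow_pos_of_pos hr p
      positivity
    have h3 : (1 / (D * r ^ p)) * (⨍ y in ball (0:EuclideanSpace ℝ (Fin d)) r, Jf p (V (z + y) - V z)) ≤
        (1 / (D * r ^ p)) * ⨍ y in ball (0:EuclideanSpace ℝ (Fin d)) r, Jf p (U (z + y) - U z) := by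
      simp only [Jf]
      linarith
    have h4 := le_of_mul_le_mul_left h3 hc0
    rw [setAverage_eq, setAverage_eq, smul_eq_mul, smul_eq_mul] at h4
    exact le_of_mul_le_mul_left h4 (inv_pos.2 hballpos)
  -- integrability
  have hbnd : ∀ t : ℝ, |t| ≤ 2 * M → ‖Jf p t‖ ≤ (2 * M + 1) ^ (p - 1) := by
    intro t ht
    rw [Real.norm_eq_abs, Jf_abs hp]
    exact Real.rpow_le_rpow (abs_nonneg t) (by linarith) (by linarith)
  have habsU : ∀ z ∈ Ω, ∀ y ∈ ball (0:EuclideanSpace ℝ (Fin d)) r, |U (z + y) - U z| ≤ 2 * M := by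
    intro z hz y hy
    have h1 := (hM (z + y) (hmem z hz y hy)).1
    have h2 := (hM z (Or.inl hz)).1
    have := abs_sub_abs_le_abs_sub (U (z+y)) (U z)
    calc |U (z + y) - U z| ≤ |U (z + y)| + |U z| := abs_sub _ _
    _ ≤ 2 * M := by linarith
  have habsV : ∀ z ∈ Ω, ∀ y ∈ ball (0:EuclideanSpace ℝ (Fin d)) r, |V (z + y) - V z| ≤ 2 * M := by
    intro z hz y hy
    have h1 := (hM (z + y) (hmem z hz y hy)).2
    have h2 := (hM z (Or.inl hz)).2
    calc |V (z + y) - V z| ≤ |V (z + y)| + |V z| := abs_sub _ _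
    _ ≤ 2 * M := by linarith
  have hintU : ∀ z ∈ Ω, IntegrableOn (fun y => Jf p (U (z + y) - U z)) (ball (0:EuclideanSpace ℝ (Fin d)) r) volume := by
    intro z hz
    refine Integrable.mono' (g := fun _ => (2 * M + 1) ^ (p - 1)) ((integrableOn_const measure_ball_lt_top.ne enorm_ne_top)) ?_ ?_
    · exact ((Jf_continuous hp).measurable.comp
        ((hUm.comp (measurable_const_add z)).sub measurable_const)).aestronglyMeasurable
    · exact (ae_restrict_iff' measurableSet_ball).2
        (Filter.Eventually.of_forall fun y hy => hbnd _ (habsU z hz y hy))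
  have hintV : ∀ z ∈ Ω, IntegrableOn (fun y => Jf p (V (z + y) - V z)) (ball (0:EuclideanSpace ℝ (Fin d)) r) volume := by
    intro z hz
    refine Integrable.mono' (g := fun _ => (2 * M + 1) ^ (p - 1)) ((integrableOn_const measure_ball_lt_top.ne enorm_ne_top)) ?_ ?_
    · exact ((Jf_continuous hp).measurable.comp
        ((hVm.comp (measurable_const_add z)).sub measurable_const)).aestronglyMeasurable
    · exact (ae_restrict_iff' measurableSet_ball).2
        (Filter.Eventually.of_forall fun y hy => hbnd _ (habsV z hz y hy))
  -- the direction functional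
  set i0 : Fin d := ⟨0, hd⟩ with hi0
  set e : EuclideanSpace ℝ (Fin d) := EuclideanSpace.single i0 (1:ℝ) with hedef
  have he : ‖e‖ = 1 := by rw [hedef, EuclideanSpace.norm_single]; simp
  set φ : EuclideanSpace ℝ (Fin d) → ℝ := fun y => inner ℝ e y with hφdef
  have hφcont : Continuous φ := continuous_const.inner continuous_id
  have hφadd : ∀ a b : EuclideanSpace ℝ (Fin d), φ (a + b) = φ a + φ b := fun a b => inner_add_right e a b
  have hφle : ∀ y : EuclideanSpace ℝ (Fin d), |φ y| ≤ ‖y‖ := fun y =>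
    (abs_real_inner_le_norm e y).trans (by rw [he, one_mul])
  -- the cap
  set cap : Set (EuclideanSpace ℝ (Fin d)) := ball (0:EuclideanSpace ℝ (Fin d)) r ∩ {y | r / 2 < φ y} with hcapdef
  have hcapopen : IsOpen cap := isOpen_ball.inter (isOpen_lt continuous_const hφcont)
  have hcapne : cap.Nonempty := by
    refine ⟨(3 * r / 4) • e, ?_, ?_⟩
    · rw [mem_ball, dist_zero_right, norm_smul, he, mul_one, Real.norm_eq_abs,
        abs_of_pos (by linarith : (0:ℝ) < 3 * r / 4)]
      linarith
    · show r / 2 < φ ((3 * r / 4) • e)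
      have : φ ((3 * r / 4) • e) = (3 * r / 4) * inner ℝ e e := real_inner_smul_right e e _
      rw [this, real_inner_self_eq_norm_sq, he]
      norm_num
      linarith
  have hcapsub : cap ⊆ ball (0:EuclideanSpace ℝ (Fin d)) r := Set.inter_subset_left
  set m₀ : ℝ := (volume cap).toReal with hm₀def
  have hm₀pos : 0 < m₀ :=
    ENNReal.toReal_pos (hcapopen.measure_pos volume hcapne).ne'
      ((lt_of_le_of_lt (measure_mono hcapsub) measure_ball_lt_top)).ne
  have hm₀le : m₀ ≤ (volume (ball (0:EuclideanSpace ℝ (Fin d)) r)).toReal := by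
    apply ENNReal.toReal_mono measure_ball_lt_top.ne (measure_mono hcapsub)
  -- THE STEP LEMMA
  have hstep : ∀ ε' : ℝ, 0 < ε' → ε' ≤ S / 2 → ∃ ε : ℝ, 0 < ε ∧ ε ≤ ε' ∧
      ∀ z ∈ Ω, S - ε ≤ U z - V z →
        ∃ z', z' ∈ Ω ∧ S - ε' ≤ U z' - V z' ∧ φ z + r / 2 ≤ φ z' := by
    intro ε' hε' hε'S
    -- the constant c from strict monotonicity
    obtain ⟨t₀, ht₀mem, ht₀min⟩ :=
      (isCompact_Icc : IsCompact (Set.Icc (-(2*M)) (2*M))).exists_isMinOn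
        ⟨0, by constructor <;> linarith⟩
        (((Jf_continuous hp).sub ((Jf_continuous hp).comp
          (continuous_id.sub continuous_const))).continuousOn
          (f := fun t => Jf p t - Jf p (t - ε' / 2)))
    set c : ℝ := Jf p t₀ - Jf p (t₀ - ε' / 2) with hcdef
    have hc : 0 < c := sub_pos.2 (Jf_strictMono hp (by linarith))
    have hcle : ∀ t, |t| ≤ 2 * M → Jf p (t - ε' / 2) ≤ Jf p t - c := by
      intro t ht
      have := ht₀min (abs_le.1 ht)
      simp only [Set.mem_setOf_eq] at this
      have h2 : c ≤ Jf p t - Jf p (t - ε' / 2) := this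
      linarith
    set β : ℝ := c * m₀ / (2 * (volume (ball (0:EuclideanSpace ℝ (Fin d)) r)).toReal) with hβdef
    have hβ : 0 < β := by positivity
    -- the modulus ε from uniform continuity
    have huc := (isCompact_Icc : IsCompact (Set.Icc (-(2*M+1)) (2*M+1))).uniformContinuousOn_of_continuous
      (Jf_continuous hp).continuousOn
    obtain ⟨δ, hδ, hδβ⟩ := Metric.uniformContinuousOn_iff.1 huc β hβ
    set ε : ℝ := min (δ / 2) (min (ε' / 2) 1) with hεdef
    have hεpos : 0 < ε := by
      apply lt_min (by linarith) (lt_min (by linarith) one_pos)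
    have hεδ : ε < δ := lt_of_le_of_lt (min_le_left _ _) (by linarith)
    have hεε' : ε ≤ ε' / 2 := le_trans (min_le_right _ _) (min_le_left _ _)
    have hε1 : ε ≤ 1 := le_trans (min_le_right _ _) (min_le_right _ _)
    have hmod : ∀ t, |t| ≤ 2 * M → Jf p (t + ε) - Jf p t ≤ β := by
      intro t ht
      have ht' := abs_le.1 ht
      have h1 : t ∈ Set.Icc (-(2*M+1)) (2*M+1) := ⟨by linarith, by linarith⟩
      have h2 : t + ε ∈ Set.Icc (-(2*M+1)) (2*M+1) := ⟨by linarith, by linarith⟩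
      have h3 := hδβ (t + ε) h2 t h1 (by
        rw [Real.dist_eq]
        have : t + ε - t = ε := by ring
        rw [this, abs_of_pos hεpos]
        exact hεδ)
      rw [Real.dist_eq] at h3
      calc Jf p (t + ε) - Jf p t ≤ |Jf p (t + ε) - Jf p t| := le_abs_self _
      _ ≤ β := h3.le
    refine ⟨ε, hεpos, by linarith, ?_⟩
    intro z hz hθ
    set Bs : Set (EuclideanSpace ℝ (Fin d)) := {y | U (z + y) - V (z + y) ≤ S - ε'} with hBsdef
    have hBmeas : MeasurableSet Bs :=
      measurableSet_le ((hUm.comp (measurable_const_add z)).sub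
        (hVm.comp (measurable_const_add z))) measurable_const
    -- pointwise bound
    have hpt : ∀ y ∈ ball (0:EuclideanSpace ℝ (Fin d)) r,
        Jf p (U (z + y) - U z) - Jf p (V (z + y) - V z) ≤
          Bs.indicator (fun _ => -(c + β)) y + β := by
      intro y hy
      have hb2M := habsV z hz y hy
      have hx2M := hSle (z + y) (hmem z hz y hy)
      by_cases hyB : y ∈ Bs
      · rw [Set.indicator_of_mem hyB]
        have hyB' : U (z + y) - V (z + y) ≤ S - ε' := hyB
        have h1 : U (z + y) - U z ≤ (V (z + y) - V z) - ε' / 2 := by linarith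
        have h2 := (Jf_strictMono hp).monotone h1
        have h3 := hcle _ hb2M
        clear_value c β
        linarith
      · rw [Set.indicator_of_notMem hyB]
        have h1 : U (z + y) - U z ≤ (V (z + y) - V z) + ε := by linarith
        have h2 := (Jf_strictMono hp).monotone h1
        have h3 := hmod _ hb2M
        linarith
    -- integrate
    have hintInd : IntegrableOn (fun y => Bs.indicator (fun _ : EuclideanSpace ℝ (Fin d) => -(c + β)) y + β)
        (ball (0:EuclideanSpace ℝ (Fin d)) r) volume := by
      apply Integrable.add
      · exact ((integrableOn_const measure_ball_lt_top.ne enorm_ne_top)).indicator hBmeas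
      · exact (integrableOn_const measure_ball_lt_top.ne enorm_ne_top)
    have h0 : (0:ℝ) ≤ ∫ y in ball (0:EuclideanSpace ℝ (Fin d)) r,
        (Jf p (U (z + y) - U z) - Jf p (V (z + y) - V z)) := by
      rw [integral_sub (hintU z hz) (hintV z hz)]
      linarith [hineq z hz]
    have h4 := setIntegral_mono_on ((hintU z hz).sub (hintV z hz)) hintInd
      measurableSet_ball hpt
    have h5 : ∫ y in ball (0:EuclideanSpace ℝ (Fin d)) r, (Bs.indicator (fun _ : EuclideanSpace ℝ (Fin d) => -(c + β)) y + β) =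
        -(c + β) * (volume (ball (0:EuclideanSpace ℝ (Fin d)) r ∩ Bs)).toReal +
          β * (volume (ball (0:EuclideanSpace ℝ (Fin d)) r)).toReal := by
      rw [integral_add (((integrableOn_const (C := -(c + β)) (s := ball (0:EuclideanSpace ℝ (Fin d)) r) (μ := volume) measure_ball_lt_top.ne enorm_ne_top)).indicator hBmeas)
        ((integrableOn_const (C := β) (s := ball (0:EuclideanSpace ℝ (Fin d)) r) (μ := volume) measure_ball_lt_top.ne enorm_ne_top)),
        setIntegral_indicator hBmeas, setIntegral_const, setIntegral_const,
        smul_eq_mul, smul_eq_mul]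
      simp only [measureReal_def]
      ring
    set μB : ℝ := (volume (ball (0:EuclideanSpace ℝ (Fin d)) r ∩ Bs)).toReal with hμBdef
    set μb : ℝ := (volume (ball (0:EuclideanSpace ℝ (Fin d)) r)).toReal with hμbdef
    have hμB0 : 0 ≤ μB := ENNReal.toReal_nonneg
    have h6 : (c + β) * μB ≤ β * μb := by
      have := h0.trans (h4.trans_eq h5)
      linarith
    have h7 : μB ≤ m₀ / 2 := by
      have hβμb : β * μb = c * m₀ / 2 := by
        rw [hβdef]
        field_simp
      have hββ := mul_nonneg hβ.le hμB0
      clear_value c β μB μb m₀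
      have h8 : c * μB ≤ c * (m₀ / 2) := by nlinarith
      exact le_of_mul_le_mul_left h8 hc
    -- find a good point in the cap
    have h9 : ¬ (cap ⊆ Bs) := by
      intro hsub
      have h10 : cap ⊆ ball (0:EuclideanSpace ℝ (Fin d)) r ∩ Bs := fun y hy => ⟨hcapsub hy, hsub hy⟩
      have h11 : m₀ ≤ μB := ENNReal.toReal_mono
        ((lt_of_le_of_lt (measure_mono Set.inter_subset_left) measure_ball_lt_top)).ne
        (measure_mono h10)
      linarith
    obtain ⟨y₁, hy₁cap, hy₁B⟩ := Set.not_subset.1 h9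
    refine ⟨z + y₁, ?_, ?_, ?_⟩
    · -- z + y₁ ∈ Ω
      have hmem1 := hmem z hz y₁ hy₁cap.1
      rcases hmem1 with h | h
      · exact h
      · exfalso
        have := (hbdry _ h).1.trans (hbdry _ h).2
        have hgt : S - ε' < U (z + y₁) - V (z + y₁) := lt_of_not_ge hy₁B
        linarith
    · exact (lt_of_not_ge hy₁B).le
    · rw [hφadd]
      have := hy₁cap.2
      simp only [Set.mem_setOf_eq] at this
      linarith
  -- THE CHAIN
  have hchain : ∀ n : ℕ, ∃ ε : ℝ, 0 < ε ∧ ε ≤ S / 2 ∧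
      ∀ z ∈ Ω, S - ε ≤ U z - V z → ∃ z', z' ∈ Ω ∧ φ z + n * (r / 2) ≤ φ z' := by
    intro n
    induction n with
    | zero =>
      exact ⟨S / 2, by linarith, le_refl _, fun z hz _ => ⟨z, hz, by simp⟩⟩
    | succ n ih =>
      obtain ⟨εn, hεn, hεnS, Hn⟩ := ih
      obtain ⟨ε, hε, hεle, Hs⟩ := hstep εn hεn hεnS
      refine ⟨ε, hε, hεle.trans hεnS, fun z hz hθ => ?_⟩
      obtain ⟨z₁, hz₁, hθ₁, hφ₁⟩ := Hs z hz hθ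
      obtain ⟨z', hz', hφ'⟩ := Hn z₁ hz₁ hθ₁
      refine ⟨z', hz', ?_⟩
      push_cast
      linarith
  -- contradiction via boundedness
  obtain ⟨R, hR⟩ := hΩb.subset_closedBall 0
  have hRφ : ∀ z ∈ Ω, |φ z| ≤ R := by
    intro z hz
    refine (hφle z).trans ?_
    have := hR hz
    rwa [mem_closedBall, dist_zero_right] at this
  obtain ⟨n, hn⟩ := exists_nat_gt ((2 * R) / (r / 2))
  obtain ⟨ε, hε, hεS, H⟩ := hchain n
  obtain ⟨w, hwmem, hws⟩ := exists_lt_of_lt_csSup himgne (show S - ε < S by linarith)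
  obtain ⟨z₀, hz₀, rfl⟩ := hwmem
  have hws' : S - ε < U z₀ - V z₀ := hws
  have hz₀Ω : z₀ ∈ Ω := by
    rcases hz₀ with h | h
    · exact h
    · exfalso
      have := (hbdry _ h).1.trans (hbdry _ h).2
      linarith
  obtain ⟨z', hz', hφ'⟩ := H z₀ hz₀Ω hws'.le
  have hb1 := abs_le.1 (hRφ z' hz')
  have hb2 := abs_le.1 (hRφ z₀ hz₀Ω)
  have hr2 : (0:ℝ) < r / 2 := by linarith
  have hn' : 2 * R < n * (r / 2) := (div_lt_iff₀ hr2).1 hn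
  linarith
end

section
/- Let p ∈ (1,∞), r > 0, D > 0, x ∈ ℝ^d with x ≠ z, and let φ be a bounded measurable function on B_r(x) with sup φ and inf φ finite, and f(x) ∈ ℝ. Then there exists a unique a ∈ [inf_{B_r(x)} φ + J_p^{-1}(D r^p f(x)), sup_{B_r(x)} φ + J_p^{-1}(D r^p f(x))] such that −(1/(D r^p)) ⨍_{B_r} J_p(φ(x+y) − a) dy = f(x). -/
open Real MeasureTheory Metric Filter

noncomputable def jfun (p : ℝ) (t : ℝ) : ℝ := |t| ^ (p - 2) * t

lemma jfun_neg (p t : ℝ) : jfun p (-t) = - jfun p t := by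
  simp [jfun, abs_neg, mul_neg]

lemma jfun_of_nonneg {p : ℝ} (hp : 1 < p) {t : ℝ} (ht : 0 ≤ t) :
    jfun p t = t ^ (p - 1) := by
  rcases eq_or_lt_of_le ht with h | h
  · simp [jfun, ← h, Real.zero_rpow (by linarith : p - 1 ≠ 0)]
  · rw [jfun, abs_of_pos h]
    nth_rewrite 2 [show t = t ^ (1:ℝ) by rw [Real.rpow_one]]
    rw [← Real.rpow_add h]
    ring_nf

lemma jfun_abs {p : ℝ} (hp : 1 < p) (t : ℝ) : |jfun p t| = |t| ^ (p - 1) := by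
  rcases eq_or_ne t 0 with h | h
  · simp [jfun, h, Real.zero_rpow (by linarith : p - 1 ≠ 0)]
  · have h0 : (0:ℝ) < |t| := abs_pos.2 h
    rw [jfun, abs_mul, abs_of_pos (Real.rpow_pos_of_pos h0 _)]
    nth_rewrite 2 [show |t| = |t| ^ (1:ℝ) by rw [Real.rpow_one]]
    rw [← Real.rpow_add h0]
    ring_nf

lemma jfun_strictMono {p : ℝ} (hp : 1 < p) : StrictMono (jfun p) := by
  have hp1 : (0:ℝ) < p - 1 := by linarith
  have key : ∀ u v : ℝ, 0 ≤ u → u < v → jfun p u < jfun p v := by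
    intro u v hu huv
    rw [jfun_of_nonneg hp hu, jfun_of_nonneg hp (hu.trans huv.le)]
    exact Real.rpow_lt_rpow hu huv hp1
  have hpos : ∀ t : ℝ, 0 < t → 0 < jfun p t := by
    intro t ht
    have := key 0 t le_rfl ht
    simpa [jfun] using this
  intro a b hab
  rcases le_or_gt 0 a with ha | ha
  · exact key a b ha hab
  · rcases le_or_gt b 0 with hb | hb
    · have := key (-b) (-a) (by linarith) (by linarith)
      rw [jfun_neg, jfun_neg] at this
      linarith
    · have h1 : jfun p a < 0 := by
        have := hpos (-a) (by linarith)
        rw [jfun_neg] at this; linarith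
      exact h1.trans (hpos b hb)

lemma jfun_continuous {p : ℝ} (hp : 1 < p) : Continuous (jfun p) := by
  rw [continuous_iff_continuousAt]
  intro t
  rcases eq_or_ne t 0 with h | h
  · subst h
    have habs : Tendsto (fun t : ℝ => |t| ^ (p - 1)) (nhds 0) (nhds 0) := by
      have : ContinuousAt (fun t : ℝ => |t| ^ (p - 1)) 0 := by
        exact ContinuousAt.comp (g := fun u : ℝ => u ^ (p-1)) (x := (0:ℝ))
          (by simpa using Real.continuousAt_rpow_const 0 (p-1) (Or.inr (by linarith)))
          continuous_abs.continuousAt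
      simpa [Real.zero_rpow (by linarith : p - 1 ≠ 0)] using this.tendsto
    have : Tendsto (jfun p) (nhds 0) (nhds 0) := by
      rw [tendsto_zero_iff_abs_tendsto_zero]
      have : (abs ∘ jfun p) = fun t => |t| ^ (p - 1) := funext fun t => jfun_abs hp t
      rw [this]; exact habs
    simpa [ContinuousAt, jfun] using this
  · have h0 : (0:ℝ) < |t| := abs_pos.2 h
    apply ContinuousAt.mul _ continuousAt_id
    exact ContinuousAt.comp (g := fun u : ℝ => u ^ (p-2)) (x := t)
      (Real.continuousAt_rpow_const _ _ (Or.inl (ne_of_gt h0))) continuous_abs.continuousAt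

lemma jfun_inv {p : ℝ} (hp : 1 < p) (s : ℝ) :
    jfun p (|s| ^ ((2 - p) / (p - 1)) * s) = s := by
  rcases eq_or_ne s 0 with h | h
  · simp [jfun, h]
  · have hs : (0:ℝ) < |s| := abs_pos.2 h
    have hp1 : p - 1 ≠ 0 := by linarith
    have habs : |(|s| ^ ((2 - p) / (p - 1)) * s)| = |s| ^ ((1:ℝ) / (p - 1)) := by
      rw [abs_mul, abs_of_pos (Real.rpow_pos_of_pos hs _), ← Real.rpow_add_one hs.ne']
      congr 1
      field_simp
      norm_num
    rw [jfun, habs, ← Real.rpow_mul hs.le, ← mul_assoc, ← Real.rpow_add hs,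
      show 1 / (p - 1) * (p - 2) + (2 - p) / (p - 1) = 0 by field_simp; ring,
      Real.rpow_zero, one_mul]

theorem stmt_15 (d : ℕ) (p r D fx : ℝ) (hp : 1 < p) (hr : 0 < r) (hD : 0 < D)
    (x : EuclideanSpace ℝ (Fin d)) (φ : EuclideanSpace ℝ (Fin d) → ℝ)
    (hφm : Measurable φ)
    (hbdd : BddAbove (φ '' ball x r)) (hbdd' : BddBelow (φ '' ball x r)) :
    ∃! a : ℝ,
      a ∈ Set.Icc
          (sInf (φ '' ball x r) + |D * r ^ p * fx| ^ ((2 - p) / (p - 1)) * (D * r ^ p * fx))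
          (sSup (φ '' ball x r) + |D * r ^ p * fx| ^ ((2 - p) / (p - 1)) * (D * r ^ p * fx)) ∧
        -((1 / (D * r ^ p)) * ⨍ y in ball (0 : EuclideanSpace ℝ (Fin d)) r,
            |φ (x + y) - a| ^ (p - 2) * (φ (x + y) - a)) = fx := by
  have hp1 : (0:ℝ) < p - 1 := by linarith
  set s₀ : ℝ := D * r ^ p * fx with hs₀
  set c : ℝ := |s₀| ^ ((2 - p) / (p - 1)) * s₀ with hc
  have hK : (0:ℝ) < D * r ^ p := mul_pos hD (Real.rpow_pos_of_pos hr p)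
  set m := sInf (φ '' ball x r) with hm
  set M := sSup (φ '' ball x r) with hM
  have hne : (φ '' ball x r).Nonempty := ⟨φ x, Set.mem_image_of_mem φ (mem_ball_self hr)⟩
  have hmM : m ≤ M := csInf_le_csSup hne hbdd' hbdd
  set S := ball (0 : EuclideanSpace ℝ (Fin d)) r with hS
  have hφmem : ∀ y ∈ S, m ≤ φ (x + y) ∧ φ (x + y) ≤ M := by
    intro y hy
    have hxy : x + y ∈ ball x r := by
      rw [mem_ball] at hy ⊢
      rw [dist_eq_norm] at hy ⊢
      simpa using hy
    have h1 : φ (x + y) ∈ φ '' ball x r := Set.mem_image_of_mem φ hxy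
    exact ⟨csInf_le hbdd' h1, le_csSup hbdd h1⟩
  have hSpos : 0 < volume S := measure_ball_pos volume 0 hr
  have hSlt : volume S < ⊤ := measure_ball_lt_top
  have hT : (0:ℝ) < (volume S).toReal := ENNReal.toReal_pos hSpos.ne' hSlt.ne
  have hmeas : ∀ a : ℝ, AEStronglyMeasurable (fun y => jfun p (φ (x + y) - a))
      (volume.restrict S) := by
    intro a
    exact (((jfun_continuous hp).measurable).comp
      ((hφm.comp (measurable_const_add x)).sub measurable_const)).aestronglyMeasurable
  have hB : ∀ a : ℝ, ∀ y ∈ S, ‖jfun p (φ (x + y) - a)‖ ≤ (max |m| |M| + |a|) ^ (p - 1) := by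
    intro a y hy
    rw [Real.norm_eq_abs, jfun_abs hp]
    apply Real.rpow_le_rpow (abs_nonneg _) _ hp1.le
    have h1 := (hφmem y hy).1
    have h2 := (hφmem y hy).2
    have h3 : -|m| ≤ m := neg_abs_le m
    have h4 : M ≤ |M| := le_abs_self M
    have h5 : |m| ≤ max |m| |M| := le_max_left _ _
    have h6 : |M| ≤ max |m| |M| := le_max_right _ _
    rw [abs_sub_le_iff]
    constructor
    · have := neg_abs_le a; linarith
    · have := le_abs_self a; linarith
  have hint : ∀ a : ℝ, IntegrableOn (fun y => jfun p (φ (x + y) - a)) S := by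
    intro a
    apply Integrable.mono' (g := fun _ => (max |m| |M| + |a|) ^ (p - 1))
      (integrableOn_const hSlt.ne) (hmeas a)
    exact (ae_restrict_iff' measurableSet_ball).2 (Eventually.of_forall (hB a))
  set G : ℝ → ℝ := fun a => ∫ y in S, jfun p (φ (x + y) - a) with hG
  have hGcont : Continuous G := by
    rw [continuous_iff_continuousAt]
    intro a₀
    apply continuousAt_of_dominated (bound := fun _ => (max |m| |M| + (|a₀| + 1)) ^ (p - 1))
      (Eventually.of_forall hmeas)
    · have hev : ∀ᶠ a in nhds a₀, |a - a₀| < 1 := by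
        have : Continuous fun a : ℝ => |a - a₀| := (continuous_id.sub continuous_const).abs
        have := this.continuousAt (x := a₀)
        simpa [ContinuousAt] using this.eventually_lt_const (by norm_num)
      filter_upwards [hev] with a ha
      refine (ae_restrict_iff' measurableSet_ball).2 (Eventually.of_forall fun y hy => ?_)
      refine (hB a y hy).trans ?_
      apply Real.rpow_le_rpow (by positivity) ?_ hp1.le
      have h1 : |a| - |a₀| ≤ |a - a₀| := by
        have := abs_sub_abs_le_abs_sub a a₀; linarith
      linarith
    · exact integrableOn_const hSlt.ne
    · refine Eventually.of_forall fun y => ?_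
      exact ((jfun_continuous hp).continuousAt).comp
        ((continuous_const.sub continuous_id).continuousAt)
  have hGanti : ∀ a b : ℝ, a < b → G b < G a := by
    intro a b hab
    have hpos : ∀ y : EuclideanSpace ℝ (Fin d),
        0 < jfun p (φ (x + y) - a) - jfun p (φ (x + y) - b) := by
      intro y
      have := jfun_strictMono hp (show φ (x + y) - b < φ (x + y) - a by linarith)
      linarith
    have hint2 : IntegrableOn
        (fun y => jfun p (φ (x + y) - a) - jfun p (φ (x + y) - b)) S := (hint a).sub (hint b)
    have h0 : 0 < ∫ y in S, (jfun p (φ (x + y) - a) - jfun p (φ (x + y) - b)) := by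
      rw [setIntegral_pos_iff_support_of_nonneg_ae
        (Eventually.of_forall fun y => (hpos y).le) hint2]
      have hsupp : Function.support
          (fun y => jfun p (φ (x + y) - a) - jfun p (φ (x + y) - b)) = Set.univ := by
        ext y; simp [Function.support, (hpos y).ne']
      rw [hsupp, Set.univ_inter]; exact hSpos
    rw [integral_sub (hint a) (hint b)] at h0
    linarith
  have hjc : jfun p c = s₀ := jfun_inv hp s₀
  have hjnegc : jfun p (-c) = -s₀ := by rw [jfun_neg, hjc]
  have hconst : ∫ y in S, (-s₀) ∂volume = (volume S).toReal * (-s₀) := by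
    rw [setIntegral_const, smul_eq_mul]; rfl
  have hGhi : G (M + c) ≤ (volume S).toReal * (-s₀) := by
    rw [← hconst]
    apply setIntegral_mono_on (hint (M + c)) (integrableOn_const hSlt.ne)
      measurableSet_ball
    intro y hy
    have h1 : φ (x + y) - (M + c) ≤ -c := by have := (hφmem y hy).2; linarith
    have := (jfun_strictMono hp).monotone h1
    rwa [hjnegc] at this
  have hGlo : (volume S).toReal * (-s₀) ≤ G (m + c) := by
    rw [← hconst]
    apply setIntegral_mono_on (integrableOn_const hSlt.ne) (hint (m + c))
      measurableSet_ball
    intro y hy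
    have h1 : -c ≤ φ (x + y) - (m + c) := by have := (hφmem y hy).1; linarith
    have := (jfun_strictMono hp).monotone h1
    rwa [hjnegc] at this
  set Φ : ℝ → ℝ := fun a => -((1 / (D * r ^ p)) * ((volume S).toReal⁻¹ * G a)) with hΦ
  have hstmt : ∀ a : ℝ,
      (-((1 / (D * r ^ p)) * ⨍ y in S, |φ (x + y) - a| ^ (p - 2) * (φ (x + y) - a)) = fx)
        ↔ Φ a = fx := by
    intro a
    rw [setAverage_eq, smul_eq_mul]
    exact Iff.rfl
  have hΦmono : StrictMono Φ := by
    intro a b hab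
    have h := hGanti a b hab
    have h1 : (volume S).toReal⁻¹ * G b < (volume S).toReal⁻¹ * G a :=
      mul_lt_mul_of_pos_left h (inv_pos.2 hT)
    have h2 : (1 / (D * r ^ p)) * ((volume S).toReal⁻¹ * G b)
        < (1 / (D * r ^ p)) * ((volume S).toReal⁻¹ * G a) :=
      mul_lt_mul_of_pos_left h1 (by positivity)
    exact neg_lt_neg h2
  have hΦcont : Continuous Φ := (continuous_const.mul (continuous_const.mul hGcont)).neg
  have e1 : (volume S).toReal⁻¹ * ((volume S).toReal * (-s₀)) = -s₀ := by
    rw [← mul_assoc, inv_mul_cancel₀ hT.ne', one_mul]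
  have e2 : (1 / (D * r ^ p)) * s₀ = fx := by
    rw [hs₀]; field_simp
  have hlo : Φ (m + c) ≤ fx := by
    have h1 : -s₀ ≤ (volume S).toReal⁻¹ * G (m + c) := by
      rw [← e1]; exact mul_le_mul_of_nonneg_left hGlo (by positivity)
    have h2 : (1 / (D * r ^ p)) * (-s₀) ≤ (1 / (D * r ^ p)) * ((volume S).toReal⁻¹ * G (m + c)) :=
      mul_le_mul_of_nonneg_left h1 (by positivity)
    have h3 : -((1 / (D * r ^ p)) * (-s₀)) = fx := by rw [← e2]; ring
    have := neg_le_neg h2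
    simp only [hΦ]
    linarith
  have hhi : fx ≤ Φ (M + c) := by
    have h1 : (volume S).toReal⁻¹ * G (M + c) ≤ -s₀ := by
      rw [← e1]; exact mul_le_mul_of_nonneg_left hGhi (by positivity)
    have h2 : (1 / (D * r ^ p)) * ((volume S).toReal⁻¹ * G (M + c)) ≤ (1 / (D * r ^ p)) * (-s₀) :=
      mul_le_mul_of_nonneg_left h1 (by positivity)
    have h3 : -((1 / (D * r ^ p)) * (-s₀)) = fx := by rw [← e2]; ring
    have := neg_le_neg h2
    simp only [hΦ]
    linarith
  have hlohi : m + c ≤ M + c := by linarith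
  obtain ⟨a, haIcc, haeq⟩ := intermediate_value_Icc hlohi hΦcont.continuousOn ⟨hlo, hhi⟩
  refine ⟨a, ⟨haIcc, (hstmt a).2 haeq⟩, ?_⟩
  rintro b ⟨-, hbeq⟩
  exact hΦmono.injective (((hstmt b).1 hbeq).trans haeq.symm)
end

section
/- Let n ≥ 1 be an integer, ε ∈ ℝ with |ε| < 1/(2n+1), and β > 0. Define the map 𝒜 : ℂ → ℂ in polar coordinates by 𝒜(re^{iθ}) = r^β e^{-inθ}(e^{i(n+1)θ} + ε e^{-i(n+1)θ}). Then |𝒜(re^{iθ})| = r^β √(1 + ε² + 2ε cos(2(n+1)θ)), and the Jacobian determinant of 𝒜 (as a map ℝ² → ℝ²) at re^{iθ} with r > 0 equals β r^{2(β−1)}(1 − (2n+1)ε² − 2nε cos(2(n+1)θ)), which is strictly positive. -/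
open Real Complex ComplexConjugate

lemma inner_c (z w : ℂ) : (inner ℝ z w : ℝ) = z.re * w.re + z.im * w.im := by
  rw [real_inner_eq_re_inner ℂ, RCLike.inner_apply]
  simp [Complex.mul_re]; ring

lemma ofReal_inner (z h : ℂ) :
    ((z.re * h.re + z.im * h.im : ℝ) : ℂ) = (conj z * h + z * conj h) / 2 := by
  apply Complex.ext <;> simp <;> ring

lemma ofReal_inner' (z h : ℂ) :
    (((inner ℝ z h : ℝ)) : ℂ) = (conj z * h + z * conj h) / 2 := by
  rw [inner_c]; exact ofReal_inner z h

lemma my_hasFDerivAt_norm_rpow (α : ℝ) {z : ℂ} (hz : z ≠ 0) :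
    HasFDerivAt (fun w : ℂ => ‖w‖ ^ α) ((α * ‖z‖ ^ (α - 2)) • (innerSL ℝ z)) z := by
  have hzn : (0:ℝ) < ‖z‖ := norm_pos_iff.2 hz
  have h2 : (‖z‖^2 : ℝ) ≠ 0 := by positivity
  have heq : (fun w : ℂ => ‖w‖ ^ α) = fun w => ((‖w‖ ^ 2 : ℝ)) ^ (α/2) := by
    funext w
    rw [← Real.rpow_natCast ‖w‖ 2, ← Real.rpow_mul (norm_nonneg w)]
    rw [show ((2:ℕ):ℝ) * (α/2) = α by push_cast; ring]
  rw [heq]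
  have hpow := Real.hasDerivAt_rpow_const (x := ‖z‖^2) (p := α/2) (Or.inl h2)
  have hc := hpow.comp_hasFDerivAt z ((hasStrictFDerivAt_norm_sq z).hasFDerivAt)
  have hrw : ((‖z‖^2 : ℝ)) ^ (α/2 - 1) = ‖z‖ ^ (α - 2) := by
    rw [← Real.rpow_natCast ‖z‖ 2, ← Real.rpow_mul (norm_nonneg z)]
    rw [show ((2:ℕ):ℝ) * (α/2 - 1) = α - 2 by push_cast; ring]
  refine hc.congr_fderiv ?_
  ext h
  simp only [ContinuousLinearMap.smul_apply, smul_eq_mul, hrw, nsmul_eq_mul, Nat.cast_ofNat,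
    ContinuousLinearMap.coe_smul', Pi.smul_apply]
  ring

noncomputable def Lpq (p q : ℂ) : ℂ →L[ℝ] ℂ :=
  p • (ContinuousLinearMap.id ℝ ℂ) + q • (Complex.conjCLE : ℂ ≃L[ℝ] ℂ).toContinuousLinearMap

lemma Lpq_apply (p q h : ℂ) : Lpq p q h = p * h + q * conj h := by
  simp [Lpq, Complex.conjCLE_apply]

lemma det_Lpq (p q : ℂ) :
    LinearMap.det ((Lpq p q : ℂ →L[ℝ] ℂ) : ℂ →ₗ[ℝ] ℂ) = Complex.normSq p - Complex.normSq q := by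
  rw [← LinearMap.det_toMatrix Complex.basisOneI, Matrix.det_fin_two]
  simp [LinearMap.toMatrix_apply, Lpq_apply, Complex.coe_basisOneI_repr, Complex.normSq_apply,
    Complex.coe_basisOneI]
  ring

noncomputable def Fmap (m : ℕ) (ε β : ℝ) : ℂ → ℂ := fun w =>
  (‖w‖ ^ (β - 1) : ℝ) • w + (ε * ‖w‖ ^ (β - m)) • (conj (w ^ m))

lemma hasFDerivAt_Fmap (m : ℕ) (ε β : ℝ) {z : ℂ} (hz : z ≠ 0) :
    HasFDerivAt (Fmap m ε β)
      (Lpq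
        (((‖z‖ ^ (β-1) : ℝ) : ℂ) + (((β-1) * ‖z‖^(β-1-2) / 2 : ℝ) : ℂ) * (conj z * z)
          + ((ε * ((β-(m:ℝ)) * ‖z‖^(β-(m:ℝ)-2)) / 2 : ℝ) : ℂ) * ((conj z)^m * conj z))
        ((((β-1) * ‖z‖^(β-1-2) / 2 : ℝ) : ℂ) * (z*z)
          + ((ε * ‖z‖^(β-(m:ℝ)) * m : ℝ) : ℂ) * (conj z)^(m-1)
          + ((ε * ((β-(m:ℝ)) * ‖z‖^(β-(m:ℝ)-2)) / 2 : ℝ) : ℂ) * (z * (conj z)^m))) z := by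
  have hA := (my_hasFDerivAt_norm_rpow (β-1) hz).smul (hasFDerivAt_id z)
  have hGpow := ((hasDerivAt_pow m z).hasFDerivAt).restrictScalars ℝ
  have hG := ((Complex.conjCLE.toContinuousLinearMap.hasFDerivAt
      (x := z ^ m)).comp z hGpow)
  have hG' : HasFDerivAt (fun w : ℂ => conj (w ^ m))
      (Complex.conjCLE.toContinuousLinearMap.comp
        ((ContinuousLinearMap.smulRight (1 : ℂ →L[ℂ] ℂ) ((m:ℂ) * z^(m-1))).restrictScalars ℝ)) z := by
    refine hG.congr_fderiv ?_
    ext h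
    simp
  have hc2 := (my_hasFDerivAt_norm_rpow (β-(m:ℝ)) hz).const_mul ε
  have hB := hc2.smul hG'
  have hT := hA.add hB
  refine hT.congr_fderiv ?_
  ext h
  simp only [ContinuousLinearMap.add_apply, ContinuousLinearMap.smul_apply,
    ContinuousLinearMap.smulRight_apply, ContinuousLinearMap.coe_id', id_eq,
    ContinuousLinearMap.coe_comp', Function.comp_apply,
    ContinuousLinearMap.coe_restrictScalars', ContinuousLinearMap.one_apply,
    ContinuousLinearEquiv.coe_coe, Complex.conjCLE_apply, innerSL_apply_apply,
    smul_eq_mul, Complex.real_smul, Lpq_apply]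
  simp only [Complex.ofReal_mul, ofReal_inner']
  simp only [map_mul, map_pow, map_natCast, Complex.conj_conj]
  push_cast
  ring

lemma normSq_aux (a b c : ℝ) :
    Complex.normSq ((a:ℂ) + (b:ℂ) * Complex.exp ((c:ℂ) * I)) =
      a^2 + b^2 + 2*a*b*Real.cos c := by
  have h := Real.sin_sq_add_cos_sq c
  simp [Complex.normSq_apply, Complex.add_re, Complex.add_im, Complex.mul_re, Complex.mul_im,
    Complex.exp_ofReal_mul_I_re, Complex.exp_ofReal_mul_I_im]
  nlinarith [h]

lemma normSq_exp_I (x : ℝ) : Complex.normSq (Complex.exp ((x:ℂ) * I)) = 1 := by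
  have := Complex.norm_exp_ofReal_mul_I x
  rw [Complex.normSq_eq_norm_sq, this, one_pow]

lemma hE (a b : ℝ) : Complex.exp ((a:ℂ)*I) * Complex.exp ((b:ℂ)*I) = Complex.exp ((↑(a+b):ℂ)*I) := by
  rw [← Complex.exp_add]; push_cast; ring_nf

lemma hEp (a : ℝ) (k : ℕ) : Complex.exp ((a:ℂ)*I)^k = Complex.exp ((↑((k:ℝ)*a):ℂ)*I) := by
  rw [← Complex.exp_nat_mul]; congr 1; push_cast; ring

lemma hconj (r θ : ℝ) : conj ((r:ℂ) * Complex.exp ((θ:ℂ)*I)) = (r:ℂ) * Complex.exp ((↑(-θ):ℂ)*I) := by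
  rw [map_mul, Complex.conj_ofReal, ← Complex.exp_conj]
  congr 2
  push_cast
  simp

lemma A_eq_F (n : ℕ) (ε β : ℝ) (r : ℝ) (hr : 0 < r) (θ : ℝ) :
    ((r ^ β : ℝ) : ℂ) * Complex.exp (-(n : ℂ) * θ * I) *
      (Complex.exp (((n : ℂ) + 1) * θ * I) + (ε : ℂ) * Complex.exp (-((n : ℂ) + 1) * θ * I))
      = Fmap (2*n+1) ε β ((r:ℂ) * Complex.exp ((θ:ℂ)*I)) := by
  have hP : (0:ℝ) < r := hr
  set P := Complex.exp ((θ:ℂ)*I) with hPdef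
  set Q := Complex.exp ((↑(-θ):ℂ)*I) with hQdef
  have hPQ : P * Q = 1 := by rw [hPdef, hQdef, hE]; simp
  have hPQn : P^n * Q^n = 1 := by rw [← mul_pow, hPQ, one_pow]
  unfold Fmap
  rw [show ((r:ℂ) * P) ^ (2*n+1) = (r:ℂ)^(2*n+1) * P^(2*n+1) from mul_pow _ _ _]
  rw [map_mul, map_pow, map_pow, Complex.conj_ofReal]
  have hcP : conj P = Q := by
    rw [hPdef, hQdef, ← Complex.exp_conj]; congr 1; push_cast; simp
  rw [hcP]
  have hnorm : ‖(r:ℂ) * P‖ = r := by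
    rw [hPdef]; simp [map_mul, Complex.norm_exp_ofReal_mul_I, abs_of_pos hr]
  rw [hnorm]
  -- rewrite LHS exponentials in terms of P, Q
  rw [show -(n:ℂ) * (θ:ℂ) * I = (↑((n:ℝ)*(-θ)):ℂ) * I by push_cast; ring]
  rw [show ((n:ℂ)+1) * (θ:ℂ) * I = (↑(((((n+1):ℕ)):ℝ)*θ):ℂ) * I by push_cast; ring]
  rw [show -((n:ℂ)+1) * (θ:ℂ) * I = (↑(((((n+1):ℕ)):ℝ)*(-θ)):ℂ) * I by push_cast; ring]
  rw [← hEp (-θ) n, ← hEp θ (n+1), ← hEp (-θ) (n+1)]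
  rw [show Complex.exp ((θ:ℂ)*I) = P from rfl, show Complex.exp ((↑(-θ):ℂ)*I) = Q from rfl]
  -- real coefficient identities
  have c1 : ((r^(β-1) * r : ℝ) : ℂ) = ((r^β : ℝ) : ℂ) := by
    norm_cast
    rw [← Real.rpow_add_one hr.ne' (β-1), show β-1+1 = β by ring]
  have c2 : ((ε * r^(β-((2*n+1):ℕ)) * r^((2*n+1):ℕ) : ℝ) : ℂ) = ((ε * r^β : ℝ) : ℂ) := by
    norm_cast
    rw [mul_assoc, ← Real.rpow_natCast r (2*n+1), ← Real.rpow_add hr,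
      show β-(((2*n+1):ℕ):ℝ)+(((2*n+1):ℕ):ℝ) = β by ring]
  -- now it's polynomial in P, Q with relation hPQn
  push_cast [Complex.real_smul] at *
  linear_combination ((r^β : ℝ) : ℂ) * P * hPQn - P * c1 - Q^(2*n+1) * c2

theorem stmt_17 (n : ℕ) (hn : 1 ≤ n) (ε β : ℝ) (hε : |ε| < 1 / (2 * (n : ℝ) + 1))
    (hβ : 0 < β) (𝒜 : ℂ → ℂ)
    (h𝒜 : ∀ r : ℝ, 0 < r → ∀ θ : ℝ,
      𝒜 (r * Complex.exp (θ * Complex.I))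
        = ((r ^ β : ℝ) : ℂ) * Complex.exp (-(n : ℂ) * θ * Complex.I) *
            (Complex.exp (((n : ℂ) + 1) * θ * Complex.I) +
              (ε : ℂ) * Complex.exp (-((n : ℂ) + 1) * θ * Complex.I))) :
    ∀ r : ℝ, 0 < r → ∀ θ : ℝ,
      ‖𝒜 (r * Complex.exp (θ * Complex.I))‖
          = r ^ β * Real.sqrt (1 + ε ^ 2 + 2 * ε * Real.cos (2 * ((n : ℝ) + 1) * θ)) ∧
        LinearMap.det (fderiv ℝ 𝒜 (r * Complex.exp (θ * Complex.I)) : ℂ →ₗ[ℝ] ℂ)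
          = β * r ^ (2 * (β - 1)) *
              (1 - (2 * (n : ℝ) + 1) * ε ^ 2 - 2 * (n : ℝ) * ε * Real.cos (2 * ((n : ℝ) + 1) * θ)) ∧
        0 < β * r ^ (2 * (β - 1)) *
              (1 - (2 * (n : ℝ) + 1) * ε ^ 2 - 2 * (n : ℝ) * ε * Real.cos (2 * ((n : ℝ) + 1) * θ)) := by
  intro r hr θ
  have hz : ((r:ℂ) * Complex.exp ((θ:ℂ)*I)) ≠ 0 := by
    simp [Complex.exp_ne_zero, hr.ne']
  -- positivity part
  have hd : (0:ℝ) < 2*(n:ℝ)+1 := by positivity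
  have h1 : |ε| * (2*(n:ℝ)+1) < 1 := (lt_div_iff₀ hd).1 hε
  have h2 : ε * Real.cos (2*((n:ℝ)+1)*θ) ≤ |ε| := by
    calc ε * Real.cos (2*((n:ℝ)+1)*θ) ≤ |ε * Real.cos (2*((n:ℝ)+1)*θ)| := le_abs_self _
    _ = |ε| * |Real.cos (2*((n:ℝ)+1)*θ)| := abs_mul _ _
    _ ≤ |ε| * 1 := by
        have := Real.abs_cos_le_one (2*((n:ℝ)+1)*θ)
        exact mul_le_mul_of_nonneg_left this (abs_nonneg ε)
    _ = |ε| := mul_one _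
  have h3 : ε^2 = |ε|^2 := (_root_.sq_abs ε).symm
  have hpos : 0 < 1 - (2*(n:ℝ)+1)*ε^2 - 2*(n:ℝ)*ε*Real.cos (2*((n:ℝ)+1)*θ) := by
    nlinarith [h1, h2, h3, abs_nonneg ε,
      mul_le_mul_of_nonneg_right h1.le (abs_nonneg ε),
      mul_le_mul_of_nonneg_left h2 (show (0:ℝ) ≤ 2*(n:ℝ) by positivity)]
  have hrp : 0 < r ^ (2*(β-1)) := Real.rpow_pos_of_pos hr _
  refine ⟨?_, ?_, mul_pos (mul_pos hβ hrp) hpos⟩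
  · -- Part 1: absolute value
    rw [h𝒜 r hr θ, norm_mul, norm_mul]
    have e0 : ‖((r^β:ℝ):ℂ)‖ = r^β := by
      rw [Complex.norm_real, Real.norm_eq_abs, abs_of_pos (Real.rpow_pos_of_pos hr β)]
    have e1 : ‖Complex.exp (-(n:ℂ)*θ*I)‖ = 1 := by
      rw [show -(n:ℂ)*(θ:ℂ)*I = (↑((n:ℝ)*(-θ)):ℂ)*I by push_cast; ring,
        Complex.norm_exp_ofReal_mul_I]
    have e2 : Complex.exp (((n:ℂ)+1)*(θ:ℂ)*I) + (ε:ℂ) * Complex.exp (-((n:ℂ)+1)*(θ:ℂ)*I)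
        = Complex.exp ((↑(((n:ℝ)+1)*θ):ℂ)*I) *
            ((1:ℂ) + (ε:ℂ) * Complex.exp ((↑(-(2*(((n:ℝ)+1)*θ))):ℂ)*I)) := by
      rw [show ((n:ℂ)+1)*(θ:ℂ)*I = (↑(((n:ℝ)+1)*θ):ℂ)*I by push_cast; ring,
        show -((n:ℂ)+1)*(θ:ℂ)*I = (↑(-(((n:ℝ)+1)*θ)):ℂ)*I by push_cast; ring]
      have hsplit : Complex.exp ((↑(-(((n:ℝ)+1)*θ)):ℂ)*I)
          = Complex.exp ((↑(((n:ℝ)+1)*θ):ℂ)*I) * Complex.exp ((↑(-(2*(((n:ℝ)+1)*θ))):ℂ)*I) := by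
        rw [hE, show ((n:ℝ)+1)*θ + -(2*(((n:ℝ)+1)*θ)) = -(((n:ℝ)+1)*θ) by ring]
      rw [hsplit]; ring
    rw [e0, e1, e2, norm_mul, Complex.norm_exp_ofReal_mul_I, one_mul, mul_one]
    rw [Complex.norm_def, show ((1:ℂ) + (ε:ℂ) * Complex.exp ((↑(-(2*(((n:ℝ)+1)*θ))):ℂ)*I))
        = (((1:ℝ)):ℂ) + ((ε:ℝ):ℂ) * Complex.exp ((↑(-(2*(((n:ℝ)+1)*θ))):ℂ)*I) by norm_num]
    rw [normSq_aux, Real.cos_neg, show 2*(((n:ℝ)+1)*θ) = 2*((n:ℝ)+1)*θ by ring,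
      show (1:ℝ)^2 + ε^2 + 2*1*ε*Real.cos (2*((n:ℝ)+1)*θ)
        = 1 + ε^2 + 2*ε*Real.cos (2*((n:ℝ)+1)*θ) by ring]
  · -- Part 2: Jacobian determinant
    set z : ℂ := (r:ℂ) * Complex.exp ((θ:ℂ)*I) with hzdef
    have hFd := hasFDerivAt_Fmap (2*n+1) ε β hz
    have hev : 𝒜 =ᶠ[nhds z] Fmap (2*n+1) ε β := by
      filter_upwards [IsOpen.mem_nhds isOpen_compl_singleton hz] with w hw
      have hw' : w ≠ 0 := hw
      have hw0 : 0 < ‖w‖ := norm_pos_iff.2 hw'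
      have hrep := Complex.norm_mul_exp_arg_mul_I w
      calc 𝒜 w = 𝒜 (↑(‖w‖) * Complex.exp (↑(Complex.arg w)*I)) := by rw [hrep]
        _ = _ := by
            rw [h𝒜 _ hw0 _, A_eq_F n ε β _ hw0 _, hrep]
    have hAd := hFd.congr_of_eventuallyEq hev
    rw [hAd.fderiv, det_Lpq]
    have hnz : ‖z‖ = r := by
      rw [hzdef]; simp [map_mul, Complex.norm_exp_ofReal_mul_I, abs_of_pos hr]
    rw [hnz]
    rw [hzdef]
    rw [show (2*n+1-1) = 2*n from rfl]
    set P := Complex.exp ((θ:ℂ)*I) with hPdef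
    set Q := Complex.exp ((↑(-θ):ℂ)*I) with hQdef
    have hPQ : P * Q = 1 := by rw [hPdef, hQdef, hE]; simp
    have hconjz : conj ((r:ℂ) * P) = (r:ℂ) * Q := by rw [hPdef, hQdef]; exact hconj r θ
    rw [hconjz]
    have d1 : ((r^(β-1-2) * (r*r) : ℝ):ℂ) = ((r^(β-1):ℝ):ℂ) := by
      norm_cast
      rw [← mul_assoc, ← Real.rpow_add_one hr.ne', ← Real.rpow_add_one hr.ne',
        show β-1-2+1+1 = β-1 by ring]
    have d2 : ((r^(β-(((2*n+1):ℕ):ℝ)-2) * (r^((2*n+1):ℕ)*r) : ℝ):ℂ) = ((r^(β-1):ℝ):ℂ) := by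
      norm_cast
      rw [← mul_assoc, ← Real.rpow_natCast r (2*n+1), ← Real.rpow_add hr,
        ← Real.rpow_add_one hr.ne',
        show β-(((2*n+1):ℕ):ℝ)-2+(((2*n+1):ℕ):ℝ)+1 = β-1 by ring]
    have d3 : ((r^(β-(((2*n+1):ℕ):ℝ)) * r^((2*n:ℕ)) : ℝ):ℂ) = ((r^(β-1):ℝ):ℂ) := by
      norm_cast
      rw [← Real.rpow_natCast r (2*n), ← Real.rpow_add hr,
        show β-(((2*n+1):ℕ):ℝ)+(((2*n):ℕ):ℝ) = β-1 by push_cast; ring]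
    have hparg : ((r^(β-1):ℝ):ℂ) + (((β-1) * r^(β-1-2) / 2 : ℝ):ℂ) * ((r:ℂ)*Q * ((r:ℂ)*P))
          + ((ε * ((β-(((2*n+1):ℕ):ℝ)) * r^(β-(((2*n+1):ℕ):ℝ)-2)) / 2 : ℝ):ℂ) *
              (((r:ℂ)*Q)^(2*n+1) * ((r:ℂ)*Q))
        = (((β+1)/2*r^(β-1) : ℝ):ℂ) + ((ε*(β-(2*(n:ℝ)+1))/2*r^(β-1) : ℝ):ℂ) * Q^(2*n+2) := by
      push_cast at d1 d2 d3 ⊢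
      linear_combination ((β-1)/2*(((r^(β-1-2):ℝ)):ℂ)*(r:ℂ)*(r:ℂ))*hPQ + ((β-1)/2)*d1
        + ((ε:ℂ)*(β-(2*(n:ℂ)+1))/2*Q^(2*n+2))*d2
    have hqarg : (((β-1) * r^(β-1-2) / 2 : ℝ):ℂ) * (((r:ℂ)*P) * ((r:ℂ)*P))
          + ((ε * r^(β-(((2*n+1):ℕ):ℝ)) * (((2*n+1):ℕ):ℝ) : ℝ):ℂ) * ((r:ℂ)*Q)^(2*n)
          + ((ε * ((β-(((2*n+1):ℕ):ℝ)) * r^(β-(((2*n+1):ℕ):ℝ)-2)) / 2 : ℝ):ℂ) *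
              (((r:ℂ)*P) * ((r:ℂ)*Q)^(2*n+1))
        = P^2 * ((((β-1)/2*r^(β-1) : ℝ):ℂ)
            + ((ε*(β+(2*(n:ℝ)+1))/2*r^(β-1) : ℝ):ℂ) * Q^(2*n+2)) := by
      push_cast at d1 d2 d3 ⊢
      linear_combination ((β-1)/2*P^2)*d1
        + ((ε:ℂ)*(2*(n:ℂ)+1)*Q^(2*n))*d3
        - ((ε:ℂ)*(2*(n:ℂ)+1)*(((r^(β-1):ℝ)):ℂ)*Q^(2*n)*(1+P*Q))*hPQ
        + ((ε:ℂ)*(β-(2*(n:ℂ)+1))/2*P*Q^(2*n+1))*d2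
        - ((ε:ℂ)*(β-(2*(n:ℂ)+1))/2*(((r^(β-1):ℝ)):ℂ)*P*Q^(2*n+1))*hPQ
    rw [hparg, hqarg, map_mul]
    have hP2 : Complex.normSq (P^2) = 1 := by
      rw [hPdef, hEp θ 2, normSq_exp_I]
    have hQk : Q^(2*n+2) = Complex.exp ((↑((((2*n+2):ℕ):ℝ)*(-θ)):ℂ)*I) := by
      rw [hQdef, hEp (-θ) (2*n+2)]
    rw [hP2, one_mul, hQk, normSq_aux, normSq_aux]
    have hcosarg : Real.cos ((((2*n+2):ℕ):ℝ)*(-θ)) = Real.cos (2*((n:ℝ)+1)*θ) := by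
      rw [show ((((2*n+2):ℕ):ℝ))*(-θ) = -(2*((n:ℝ)+1)*θ) by push_cast; ring, Real.cos_neg]
    rw [hcosarg]
    have hRR : r^(β-1)*r^(β-1) = r^(2*(β-1)) := by
      rw [← Real.rpow_add hr, show β-1+(β-1) = 2*(β-1) by ring]
    rw [← hRR]
    ring
end

section
/- Let p ∈ (1,2) and a, b ∈ ℝ with a ≠ 0 and |b| < |a|/2, and δ ∈ (0, p−1). Then |J_p(a+b) − J_p(a) − J_p'(a)b| ≤ C(|a+b|^{p-2-δ} + |a|^{p-2-δ})|b|^{1+δ}, where J_p(t) = |t|^{p-2}t and J_p'(a) = (p−1)|a|^{p-2}, and C depends only on p and δ. -/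
open Real

/-- Key estimate for positive `a`. -/
lemma stmt_19_key (p δ : ℝ) (hp1 : 1 < p) (hp2 : p < 2) (hδ0 : 0 < δ) (hδ : δ < p - 1)
    (a b : ℝ) (ha : 0 < a) (hb : |b| < a / 2) :
    |(|a + b| ^ (p - 2) * (a + b)) - |a| ^ (p - 2) * a - (p - 1) * |a| ^ (p - 2) * b|
      ≤ 4 * (p - 1) * (2 - p) * |a| ^ (p - 2 - δ) * |b| ^ (1 + δ) := by
  have hb1 := abs_lt.mp hb
  have hab : 0 < a + b := by linarith [hb1.1]
  have ha2 : 0 < a / 2 := by linarith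
  rw [abs_of_pos ha, abs_of_pos hab]
  have hf : (a + b) ^ (p - 2) * (a + b) = (a + b) ^ (p - 1) := by
    rw [show p - 1 = p - 2 + 1 by ring, Real.rpow_add_one hab.ne']
  have hf2 : a ^ (p - 2) * a = a ^ (p - 1) := by
    rw [show p - 1 = p - 2 + 1 by ring, Real.rpow_add_one ha.ne']
  rw [hf, hf2]
  set s : Set ℝ := Set.uIcc a (a + b) with hs
  have hconv : Convex ℝ s := convex_uIcc _ _
  have has : a ∈ s := Set.left_mem_uIcc
  have habs : a + b ∈ s := Set.right_mem_uIcc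
  have hmem : ∀ x ∈ s, a / 2 < x ∧ |x - a| ≤ |b| := by
    intro x hx
    rcases Set.mem_uIcc.mp hx with ⟨h1, h2⟩ | ⟨h1, h2⟩
    · refine ⟨by linarith, ?_⟩
      rw [abs_le]
      constructor <;> linarith [neg_abs_le b, le_abs_self b, abs_nonneg b]
    · refine ⟨by linarith [hb1.1], ?_⟩
      rw [abs_le]
      constructor <;> linarith [neg_abs_le b, le_abs_self b, abs_nonneg b]
  set K : ℝ := (p - 1) * (2 - p) * (a / 2) ^ (p - 3) with hK
  have hKpos : 0 ≤ K := by
    have : (0:ℝ) ≤ (a / 2) ^ (p - 3) := Real.rpow_nonneg (by linarith) _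
    have h1 : (0:ℝ) < p - 1 := by linarith
    have h2 : (0:ℝ) < 2 - p := by linarith
    positivity
  -- Step 1: the derivative function h x = (p-1) x^(p-2) is K-Lipschitz on s
  have step1 : ∀ x ∈ s, |(p - 1) * x ^ (p - 2) - (p - 1) * a ^ (p - 2)| ≤ K * |b| := by
    intro x hx
    have h1 : ∀ y ∈ s, HasDerivWithinAt (fun z : ℝ => (p - 1) * z ^ (p - 2))
        ((p - 1) * ((p - 2) * y ^ (p - 3))) s y := by
      intro y hy
      have hy0 : y ≠ 0 := by have := (hmem y hy).1; linarith
      have := (Real.hasDerivAt_rpow_const (p := p - 2) (Or.inl hy0)).const_mul (p - 1)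
      simpa [show p - 2 - 1 = p - 3 by ring] using this.hasDerivWithinAt
    have hbd : ∀ y ∈ s, ‖(p - 1) * ((p - 2) * y ^ (p - 3))‖ ≤ K := by
      intro y hy
      have hy2 := (hmem y hy).1
      have hy0 : 0 < y := by linarith
      have hle : y ^ (p - 3) ≤ (a / 2) ^ (p - 3) :=
        Real.rpow_le_rpow_of_nonpos ha2 hy2.le (by linarith)
      have hyp : (0:ℝ) ≤ y ^ (p - 3) := Real.rpow_nonneg hy0.le _
      rw [Real.norm_eq_abs, abs_mul, abs_mul, abs_of_pos (by linarith : (0:ℝ) < p - 1),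
        abs_of_nonpos (by linarith : p - 2 ≤ 0), abs_of_nonneg hyp, hK]
      have h0 : (0:ℝ) ≤ (p - 1) * (2 - p) := by nlinarith
      linarith [mul_le_mul_of_nonneg_left hle h0]
    have := hconv.norm_image_sub_le_of_norm_hasDerivWithin_le h1 hbd has hx
    calc |(p - 1) * x ^ (p - 2) - (p - 1) * a ^ (p - 2)| ≤ K * ‖x - a‖ := this
      _ ≤ K * |b| := by
          have := (hmem x hx).2
          rw [Real.norm_eq_abs]
          exact mul_le_mul_of_nonneg_left this hKpos
  -- Step 2: apply MVT to g x = x^(p-1) - (p-1) a^(p-2) x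
  have step2 : |(a + b) ^ (p - 1) - a ^ (p - 1) - (p - 1) * a ^ (p - 2) * b| ≤ K * |b| * |b| := by
    have hg : ∀ y ∈ s, HasDerivWithinAt
        (fun z : ℝ => z ^ (p - 1) - (p - 1) * a ^ (p - 2) * z)
        ((p - 1) * y ^ (p - 2) - (p - 1) * a ^ (p - 2)) s y := by
      intro y hy
      have hy0 : y ≠ 0 := by have := (hmem y hy).1; linarith
      have h1 := (Real.hasDerivAt_rpow_const (p := p - 1) (Or.inl hy0))
      have h2 : HasDerivAt (fun z : ℝ => (p - 1) * a ^ (p - 2) * z)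
          ((p - 1) * a ^ (p - 2)) y := by
        simpa using (hasDerivAt_id y).const_mul ((p - 1) * a ^ (p - 2))
      have := h1.sub h2
      rw [show p - 1 - 1 = p - 2 by ring] at this
      exact this.hasDerivWithinAt
    have hbd : ∀ y ∈ s, ‖(p - 1) * y ^ (p - 2) - (p - 1) * a ^ (p - 2)‖ ≤ K * |b| :=
      fun y hy => by rw [Real.norm_eq_abs]; exact step1 y hy
    have := hconv.norm_image_sub_le_of_norm_hasDerivWithin_le hg hbd has habs
    simp only [Real.norm_eq_abs, add_sub_cancel_left] at this
    have heq : (a + b) ^ (p - 1) - a ^ (p - 1) - (p - 1) * a ^ (p - 2) * b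
        = (a + b) ^ (p - 1) - (p - 1) * a ^ (p - 2) * (a + b)
          - (a ^ (p - 1) - (p - 1) * a ^ (p - 2) * a) := by ring
    rw [heq]
    exact this
  -- Step 3: arithmetic, K |b|^2 ≤ 4 (p-1)(2-p) a^(p-2-δ) |b|^(1+δ)
  rcases eq_or_ne b 0 with rfl | hb0
  · simp [Real.zero_rpow (by positivity : 1 + δ ≠ 0)]
  have hbpos : 0 < |b| := abs_pos.mpr hb0
  have key3 : K * |b| * |b| ≤ 4 * (p - 1) * (2 - p) * a ^ (p - 2 - δ) * |b| ^ (1 + δ) := by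
    have e1 : |b| * |b| = |b| ^ (1 + δ) * |b| ^ (1 - δ) := by
      rw [← Real.rpow_add hbpos,
        show 1 + δ + (1 - δ) = ((2:ℕ):ℝ) by push_cast; ring, Real.rpow_natCast]
      ring
    have e2 : |b| ^ (1 - δ) ≤ (a / 2) ^ (1 - δ) :=
      Real.rpow_le_rpow (abs_nonneg b) hb.le (by linarith)
    have e3 : (a / 2) ^ (p - 3) * (a / 2) ^ (1 - δ) = (a / 2) ^ (p - 2 - δ) := by
      rw [← Real.rpow_add ha2, show p - 3 + (1 - δ) = p - 2 - δ by ring]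
    have e4 : (a / 2) ^ (p - 2 - δ) ≤ 4 * a ^ (p - 2 - δ) := by
      have : (a / 2 : ℝ) = a * (1 / 2) := by ring
      rw [this, Real.mul_rpow ha.le (by norm_num)]
      have h12 : ((1:ℝ)/2) ^ (p - 2 - δ) = (2:ℝ) ^ (-(p - 2 - δ)) := by
        rw [one_div, Real.inv_rpow (by norm_num : (0:ℝ) ≤ 2),
          ← Real.rpow_neg (by norm_num : (0:ℝ) ≤ 2)]
      have h2 : (2:ℝ) ^ (-(p - 2 - δ)) ≤ (2:ℝ) ^ (2:ℝ) :=
        Real.rpow_le_rpow_of_exponent_le (by norm_num) (by linarith)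
      have h4 : (2:ℝ) ^ (2:ℝ) = 4 := by
        rw [show (2:ℝ) = ((2:ℕ):ℝ) by norm_num, Real.rpow_natCast]; norm_num
      have hap : (0:ℝ) ≤ a ^ (p - 2 - δ) := Real.rpow_nonneg ha.le _
      calc a ^ (p - 2 - δ) * ((1:ℝ)/2) ^ (p - 2 - δ)
          ≤ a ^ (p - 2 - δ) * 4 := by
            apply mul_le_mul_of_nonneg_left _ hap
            rw [h12]; linarith [h2, h4.le]; 
        _ = 4 * a ^ (p - 2 - δ) := by ring
    have h1 : (0:ℝ) < p - 1 := by linarith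
    have h2 : (0:ℝ) < 2 - p := by linarith
    have hbe : (0:ℝ) ≤ |b| ^ (1 + δ) := Real.rpow_nonneg (abs_nonneg b) _
    calc K * |b| * |b| = (p - 1) * (2 - p) * |b| ^ (1 + δ) * ((a / 2) ^ (p - 3) * |b| ^ (1 - δ)) := by
          rw [hK, mul_assoc, e1]; ring
      _ ≤ (p - 1) * (2 - p) * |b| ^ (1 + δ) * ((a / 2) ^ (p - 3) * (a / 2) ^ (1 - δ)) := by
          apply mul_le_mul_of_nonneg_left (mul_le_mul_of_nonneg_left e2
            (Real.rpow_nonneg ha2.le _)) (by positivity)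
      _ = (p - 1) * (2 - p) * |b| ^ (1 + δ) * (a / 2) ^ (p - 2 - δ) := by rw [e3]
      _ ≤ (p - 1) * (2 - p) * |b| ^ (1 + δ) * (4 * a ^ (p - 2 - δ)) := by
          apply mul_le_mul_of_nonneg_left e4 (by positivity)
      _ = 4 * (p - 1) * (2 - p) * a ^ (p - 2 - δ) * |b| ^ (1 + δ) := by ring
  exact step2.trans key3

theorem stmt_19 (p δ : ℝ) (hp1 : 1 < p) (hp2 : p < 2) (hδ0 : 0 < δ) (hδ : δ < p - 1) :
    ∃ C > 0, ∀ a b : ℝ, a ≠ 0 → |b| < |a| / 2 →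
      |(|a + b| ^ (p - 2) * (a + b)) - |a| ^ (p - 2) * a - (p - 1) * |a| ^ (p - 2) * b|
        ≤ C * (|a + b| ^ (p - 2 - δ) + |a| ^ (p - 2 - δ)) * |b| ^ (1 + δ) := by
  refine ⟨4 * (p - 1) * (2 - p), by nlinarith, ?_⟩
  intro a b ha hb
  have key : |(|a + b| ^ (p - 2) * (a + b)) - |a| ^ (p - 2) * a - (p - 1) * |a| ^ (p - 2) * b|
      ≤ 4 * (p - 1) * (2 - p) * |a| ^ (p - 2 - δ) * |b| ^ (1 + δ) := by
    rcases ha.lt_or_gt with hneg | hpos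
    · have h := stmt_19_key p δ hp1 hp2 hδ0 hδ (-a) (-b) (by linarith)
        (by rw [abs_neg]; rwa [abs_of_neg hneg] at hb)
      have e1 : -a + -b = -(a + b) := by ring
      rw [e1, abs_neg, abs_neg, abs_neg] at h
      calc |(|a + b| ^ (p - 2) * (a + b)) - |a| ^ (p - 2) * a - (p - 1) * |a| ^ (p - 2) * b|
          = |(|a + b| ^ (p - 2) * (-(a + b))) - |a| ^ (p - 2) * (-a)
              - (p - 1) * |a| ^ (p - 2) * (-b)| := by
            rw [show (|a + b| ^ (p - 2) * (-(a + b))) - |a| ^ (p - 2) * (-a)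
              - (p - 1) * |a| ^ (p - 2) * (-b) = -((|a + b| ^ (p - 2) * (a + b))
              - |a| ^ (p - 2) * a - (p - 1) * |a| ^ (p - 2) * b) by ring, abs_neg]
        _ ≤ 4 * (p - 1) * (2 - p) * |a| ^ (p - 2 - δ) * |b| ^ (1 + δ) := h
    · exact stmt_19_key p δ hp1 hp2 hδ0 hδ a b hpos (by rwa [abs_of_pos hpos] at hb)
  calc |(|a + b| ^ (p - 2) * (a + b)) - |a| ^ (p - 2) * a - (p - 1) * |a| ^ (p - 2) * b|
      ≤ 4 * (p - 1) * (2 - p) * |a| ^ (p - 2 - δ) * |b| ^ (1 + δ) := key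
    _ ≤ 4 * (p - 1) * (2 - p) * (|a + b| ^ (p - 2 - δ) + |a| ^ (p - 2 - δ)) * |b| ^ (1 + δ) := by
        have h1 : (0:ℝ) ≤ |a + b| ^ (p - 2 - δ) := Real.rpow_nonneg (abs_nonneg _) _
        have h2 : (0:ℝ) ≤ |b| ^ (1 + δ) := Real.rpow_nonneg (abs_nonneg _) _
        have h3 : (0:ℝ) < 4 * (p - 1) * (2 - p) := by nlinarith
        nlinarith [mul_nonneg (mul_nonneg h3.le h1) h2]
end
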